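/- arXiv:2001.00969 — 6 statements merged into one kernel-verified Lean document; each statement's English description precedes it below -/
import Mathlib

section
/- Let R be an associative unital ℂ-algebra and let A₁, …, Aₙ be unital ℂ-subalgebras of R whose union generates R as a ℂ-algebra. Assume that for all indices 1 ≤ i < j ≤ n and all x ∈ Aⱼ, y ∈ Aᵢ, the product x * y lies in the ℂ-linear span of the set { y' * x' : y' ∈ Aᵢ, x' ∈ Aⱼ }. Then R is equal to the ℂ-linear span of the set of ordered products { x₁ * x₂ * ⋯ * xₙ : xᵢ ∈ Aᵢ for each i }. -/
section aux

variable {R : Type*} [Ring R] [Algebra ℂ R] {n : ℕ}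

/-- Extension of `x : Fin n → R` to `ℕ`, by `1` outside. -/
def xext (x : Fin n → R) : ℕ → R := fun i => if h : i < n then x ⟨i, h⟩ else 1

/-- Ordered product `x k * x (k+1) * ⋯ * x (l-1)`. -/
def seg (x : Fin n → R) (k l : ℕ) : R := ((List.range' k (l - k)).map (xext x)).prod

lemma seg_of_le (x : Fin n → R) {k l : ℕ} (h : l ≤ k) : seg x k l = 1 := by
  simp [seg, Nat.sub_eq_zero_of_le h]

lemma seg_succ (x : Fin n → R) {k l : ℕ} (h : k ≤ l) :
    seg x k (l + 1) = seg x k l * xext x l := by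
  have h1 : l + 1 - k = (l - k) + 1 := by omega
  have h2 : k + (l - k) = l := by omega
  rw [seg, h1, List.range'_1_concat, List.map_append, List.prod_append, h2]
  simp [seg]

lemma seg_congr {x y : Fin n → R} {k l : ℕ}
    (h : ∀ i, k ≤ i → i < l → xext x i = xext y i) : seg x k l = seg y k l := by
  unfold seg
  congr 1
  apply List.map_congr_left
  intro a ha
  rw [List.mem_range'_1] at ha
  exact h a ha.1 (by omega)

lemma seg_eq_one {x : Fin n → R} {k l : ℕ}
    (h : ∀ i, k ≤ i → i < l → xext x i = 1) : seg x k l = 1 := by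
  apply List.prod_eq_one
  intro a ha
  simp only [List.mem_map] at ha
  obtain ⟨i, hi, rfl⟩ := ha
  rw [List.mem_range'_1] at hi
  exact h i hi.1 (by omega)

lemma seg_append (x : Fin n → R) {k m l : ℕ} (h1 : k ≤ m) (h2 : m ≤ l) :
    seg x k l = seg x k m * seg x m l := by
  unfold seg
  rw [← List.prod_append, ← List.map_append]
  congr 2
  have h3 : k + (m - k) = m := by omega
  have h4 : l - k = (m - k) + (l - m) := by omega
  rw [h4, ← List.range'_append_1, h3]

lemma seg_single {j : ℕ} (hj : j < n) (b : R) {k l : ℕ} (hk : k ≤ j) (hl : j < l) :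
    seg (Function.update (fun _ => (1 : R)) ⟨j, hj⟩ b) k l = b := by
  set u := Function.update (fun _ => (1 : R)) (⟨j, hj⟩ : Fin n) b with hu
  have hone : ∀ i, i ≠ j → xext u i = 1 := by
    intro i hij
    unfold xext
    split
    · next h =>
      rw [hu, Function.update_of_ne]
      intro hcon
      exact hij (by simpa using congrArg Fin.val hcon)
    · rfl
  have e1 : seg u k j = 1 := seg_eq_one (fun i h1 h2 => hone i (by omega))
  have e2 : seg u (j + 1) l = 1 := seg_eq_one (fun i h1 h2 => hone i (by omega))
  have e3 : seg u j (j + 1) = b := by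
    rw [seg_succ u (le_refl j), seg_of_le u (le_refl j), one_mul]
    unfold xext
    rw [dif_pos hj, hu, Function.update_self]
  rw [seg_append u hk (le_of_lt hl), seg_append u (by omega : j ≤ j + 1) (by omega : j + 1 ≤ l),
    e1, e2, e3, one_mul, mul_one]

lemma xext_lt (x : Fin n → R) {l : ℕ} (hl : l < n) : xext x l = x ⟨l, hl⟩ := dif_pos hl

lemma ofFn_prod_eq_seg (x : Fin n → R) : (List.ofFn x).prod = seg x 0 n := by
  unfold seg
  congr 1
  apply List.ext_getElem
  · simp
  · intro i h1 h2
    have hi : i < n := by simpa using h1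
    rw [List.getElem_ofFn, List.getElem_map, List.getElem_range']
    have : 0 + 1 * i = i := by omega
    rw [this, xext_lt x hi]

end aux

/-- Let `R` be an associative unital `ℂ`-algebra and `A 0, …, A (n-1)` unital
`ℂ`-subalgebras whose union generates `R` as a `ℂ`-algebra.  Assume that for `i < j`, any
product `x * y` with `x ∈ A j`, `y ∈ A i` lies in the `ℂ`-linear span of the products
`y' * x'` with `y' ∈ A i`, `x' ∈ A j`.  Then `R` is the `ℂ`-linear span of the ordered
products `x 0 * x 1 * ⋯ * x (n-1)` with `x i ∈ A i`. -/
theorem stated_skein_straightening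
    {R : Type*} [Ring R] [Algebra ℂ R] (n : ℕ) (A : Fin n → Subalgebra ℂ R)
    (hgen : Algebra.adjoin ℂ (⋃ i, (A i : Set R)) = ⊤)
    (hexch : ∀ i j : Fin n, i < j → ∀ x ∈ A j, ∀ y ∈ A i,
      x * y ∈ Submodule.span ℂ {z : R | ∃ y' ∈ A i, ∃ x' ∈ A j, z = y' * x'}) :
    Submodule.span ℂ
      {z : R | ∃ x : Fin n → R, (∀ i, x i ∈ A i) ∧ z = (List.ofFn x).prod} = ⊤ := by
  set M : Submodule ℂ R := Submodule.span ℂ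
      {z : R | ∃ x : Fin n → R, (∀ i, x i ∈ A i) ∧ z = (List.ofFn x).prod} with hM
  -- generators of M via seg
  have hgenM : ∀ (x : Fin n → R), (∀ i, x i ∈ A i) → seg x 0 n ∈ M := by
    intro x hx
    apply Submodule.subset_span
    exact ⟨x, hx, (ofFn_prod_eq_seg x).symm⟩
  -- the key straightening lemma
  have key : ∀ l : ℕ, l ≤ n → ∀ j k : ℕ, j < k → k ≤ l → ∀ (hj : j < n),
      ∀ b ∈ A ⟨j, hj⟩, ∀ x : Fin n → R, (∀ i, x i ∈ A i) →
      seg x k l * b ∈ Submodule.span ℂ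
        {w : R | ∃ y : Fin n → R, (∀ i, y i ∈ A i) ∧ w = seg y j l} := by
    intro l
    induction l with
    | zero => intro _ j k hjk hkl; omega
    | succ l ih =>
      intro hln j k hjk hkl hj b hb x hx
      rcases Nat.lt_or_ge l k with hlk | hkl'
      · -- k = l + 1, empty segment
        rw [seg_of_le x (by omega), one_mul]
        apply Submodule.subset_span
        refine ⟨Function.update (fun _ => (1 : R)) ⟨j, hj⟩ b, ?_, ?_⟩
        · intro i
          rcases eq_or_ne i ⟨j, hj⟩ with rfl | hne
          · rw [Function.update_self]; exact hb
          · rw [Function.update_of_ne hne]; exact one_mem _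
        · rw [seg_single hj b (le_refl j) (by omega)]
      · -- k ≤ l
        have hl : l < n := by omega
        rw [seg_succ x hkl', xext_lt x hl, mul_assoc]
        have hjl : (⟨j, hj⟩ : Fin n) < ⟨l, hl⟩ := by
          simp only [Fin.mk_lt_mk]; omega
        have hexc := hexch ⟨j, hj⟩ ⟨l, hl⟩ hjl (x ⟨l, hl⟩) (hx _) b hb
        -- reduce to elements of the exchange set
        have hsub : {z : R | ∃ y' ∈ A ⟨j, hj⟩, ∃ x' ∈ A ⟨l, hl⟩, z = y' * x'} ⊆
            (Submodule.span ℂ {w : R | ∃ y : Fin n → R, (∀ i, y i ∈ A i) ∧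
              w = seg y j (l + 1)}).comap (LinearMap.mulLeft ℂ (seg x k l)) := by
          rintro z ⟨y', hy', x', hx', rfl⟩
          simp only [SetLike.mem_coe, Submodule.mem_comap, LinearMap.mulLeft_apply]
          rw [← mul_assoc]
          have hih := ih (by omega) j k hjk hkl' hj y' hy' x hx
          have hsub2 : {w : R | ∃ y : Fin n → R, (∀ i, y i ∈ A i) ∧ w = seg y j l} ⊆
              (Submodule.span ℂ {w : R | ∃ y : Fin n → R, (∀ i, y i ∈ A i) ∧
                w = seg y j (l + 1)}).comap (LinearMap.mulRight ℂ x') := by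
            rintro w ⟨y, hy, rfl⟩
            simp only [SetLike.mem_coe, Submodule.mem_comap, LinearMap.mulRight_apply]
            apply Submodule.subset_span
            refine ⟨Function.update y ⟨l, hl⟩ x', ?_, ?_⟩
            · intro i
              rcases eq_or_ne i ⟨l, hl⟩ with rfl | hne
              · rw [Function.update_self]; exact hx'
              · rw [Function.update_of_ne hne]; exact hy i
            · rw [seg_succ _ (by omega : j ≤ l), xext_lt _ hl, Function.update_self]
              congr 1
              apply seg_congr
              intro i h1 h2
              unfold xext
              split
              · next h =>
                rw [Function.update_of_ne]
                intro hcon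
                have := congrArg Fin.val hcon
                simp at this
                omega
              · rfl
          exact (Submodule.span_le.mpr hsub2) hih
        exact (Submodule.span_le.mpr hsub) hexc
  -- M is stable under right multiplication by elements of the A j
  have stepB : ∀ (j : Fin n), ∀ b ∈ A j, ∀ m ∈ M, m * b ∈ M := by
    intro j b hb m hm
    have hsub : {z : R | ∃ x : Fin n → R, (∀ i, x i ∈ A i) ∧ z = (List.ofFn x).prod} ⊆
        M.comap (LinearMap.mulRight ℂ b) := by
      rintro z ⟨x, hx, rfl⟩
      simp only [SetLike.mem_coe, Submodule.mem_comap, LinearMap.mulRight_apply]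
      rw [ofFn_prod_eq_seg, seg_append x (by omega : 0 ≤ (j : ℕ) + 1)
        (by omega : (j : ℕ) + 1 ≤ n), mul_assoc]
      have hkey := key n (le_refl n) j (j + 1) (by omega) (by omega) j.isLt b
        (by simpa using hb) x hx
      have hsub2 : {w : R | ∃ y : Fin n → R, (∀ i, y i ∈ A i) ∧ w = seg y (j : ℕ) n} ⊆
          M.comap (LinearMap.mulLeft ℂ (seg x 0 ((j : ℕ) + 1))) := by
        rintro w ⟨y, hy, rfl⟩
        simp only [SetLike.mem_coe, Submodule.mem_comap, LinearMap.mulLeft_apply]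
        set z : Fin n → R := fun i => if (i : ℕ) < (j : ℕ) then x i
          else if (i : ℕ) = (j : ℕ) then x i * y i else y i with hz
        have hzmem : ∀ i, z i ∈ A i := by
          intro i
          rw [hz]
          dsimp only
          split
          · exact hx i
          · split
            · exact mul_mem (hx i) (hy i)
            · exact hy i
        have hcalc : seg x 0 ((j : ℕ) + 1) * seg y (j : ℕ) n = seg z 0 n := by
          have hxj : (⟨(j : ℕ), j.isLt⟩ : Fin n) = j := Fin.eta j j.isLt
          rw [seg_succ x (by omega : 0 ≤ (j : ℕ)), xext_lt x j.isLt,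
            seg_append y (by omega : (j : ℕ) ≤ (j : ℕ) + 1) (by omega : (j : ℕ) + 1 ≤ n),
            seg_append z (by omega : 0 ≤ (j : ℕ) + 1) (by omega : (j : ℕ) + 1 ≤ n),
            seg_succ z (by omega : 0 ≤ (j : ℕ)), xext_lt z j.isLt]
          have h1 : seg z 0 (j : ℕ) = seg x 0 (j : ℕ) := by
            apply seg_congr
            intro i h1 h2
            unfold xext
            split
            · next h => rw [hz]; simp only; rw [if_pos h2]
            · rfl
          have h2 : seg z ((j : ℕ) + 1) n = seg y ((j : ℕ) + 1) n := by
            apply seg_congr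
            intro i h1 h2
            unfold xext
            split
            · next h =>
              rw [hz]; simp only
              rw [if_neg (show ¬ i < (j : ℕ) by omega), if_neg (show ¬ i = (j : ℕ) by omega)]
            · next h => exact absurd h2 h
          have h3 : z ⟨(j : ℕ), j.isLt⟩ = x j * y j := by
            rw [hz]; simp only
            rw [if_neg (show ¬ (j : ℕ) < (j : ℕ) by omega)]
            simp [hxj]
          have h4 : seg y (j : ℕ) ((j : ℕ) + 1) = y j := by
            rw [seg_succ y (le_refl _), seg_of_le y (le_refl _), one_mul,
              xext_lt y j.isLt, hxj]
          rw [h1, h2, h3, h4, hxj]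
          simp only [mul_assoc]
        rw [hcalc]
        exact hgenM z hzmem
      exact (Submodule.span_le.mpr hsub2) hkey
    exact (Submodule.span_le.mpr hsub) hm
  -- M is stable under right multiplication by segments
  have stepC : ∀ l : ℕ, l ≤ n → ∀ (x : Fin n → R), (∀ i, x i ∈ A i) →
      ∀ m ∈ M, m * seg x 0 l ∈ M := by
    intro l
    induction l with
    | zero => intro _ x hx m hm; rw [seg_of_le x (le_refl 0), mul_one]; exact hm
    | succ l ih =>
      intro hln x hx m hm
      have hl : l < n := by omega
      rw [seg_succ x (by omega : 0 ≤ l), xext_lt x hl, ← mul_assoc]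
      exact stepB ⟨l, hl⟩ (x ⟨l, hl⟩) (hx _) _ (ih (by omega) x hx m hm)
  -- M is stable under multiplication
  have stepD : ∀ m ∈ M, ∀ m' ∈ M, m * m' ∈ M := by
    intro m hm m' hm'
    have hsub : {z : R | ∃ x : Fin n → R, (∀ i, x i ∈ A i) ∧ z = (List.ofFn x).prod} ⊆
        M.comap (LinearMap.mulLeft ℂ m) := by
      rintro z ⟨x, hx, rfl⟩
      simp only [SetLike.mem_coe, Submodule.mem_comap, LinearMap.mulLeft_apply]
      rw [ofFn_prod_eq_seg]
      exact stepC n (le_refl n) x hx m hm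
    exact (Submodule.span_le.mpr hsub) hm'
  -- 1 ∈ M
  have honeM : (1 : R) ∈ M := by
    have := hgenM (fun _ => 1) (fun i => one_mem _)
    rwa [seg_eq_one (fun i _ _ => by unfold xext; split <;> rfl)] at this
  -- A i ⊆ M
  have hAM : ∀ (i : Fin n), ∀ a ∈ A i, a ∈ M := by
    intro i a ha
    have h := hgenM (Function.update (fun _ => (1 : R)) ⟨(i : ℕ), i.isLt⟩ a) ?_
    · rwa [seg_single i.isLt a (by omega) i.isLt] at h
    · intro k
      rcases eq_or_ne k ⟨(i : ℕ), i.isLt⟩ with rfl | hne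
      · rw [Function.update_self]; exact ha
      · rw [Function.update_of_ne hne]; exact one_mem _
  -- conclude
  rw [eq_top_iff]
  intro r hrtop
  have hr : r ∈ Algebra.adjoin ℂ (⋃ i, (A i : Set R)) := by rw [hgen]; trivial
  clear hrtop
  induction hr using Algebra.adjoin_induction with
  | mem a ha =>
    obtain ⟨s, ⟨i, rfl⟩, hs⟩ := ha
    exact hAM i a hs
  | algebraMap c =>
    rw [Algebra.algebraMap_eq_smul_one]
    exact Submodule.smul_mem _ _ honeM
  | add x y hx hy hx' hy' => exact Submodule.add_mem _ hx' hy'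
  | mul x y hx hy hx' hy' => exact stepD x hx' y hy'
end

section
/- The algebra A_q is spanned as a ℂ-vector space by the images of the monomials { aⁱ * bʲ * dᵏ : i, j, k ∈ ℕ } together with the images of the monomials { aⁱ * cʲ * dᵏ : i, j, k ∈ ℕ }. -/
noncomputable section

/-- The generator `a` of the free algebra on four generators. -/
def genA : FreeAlgebra ℂ (Fin 4) := FreeAlgebra.ι ℂ 0
/-- The generator `b`. -/
def genB : FreeAlgebra ℂ (Fin 4) := FreeAlgebra.ι ℂ 1
/-- The generator `c`. -/
def genC : FreeAlgebra ℂ (Fin 4) := FreeAlgebra.ι ℂ 2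
/-- The generator `d`. -/
def genD : FreeAlgebra ℂ (Fin 4) := FreeAlgebra.ι ℂ 3

/-- The defining relations of the quantized coordinate ring `ℂ_q[SL₂]`:
quotienting by this relation amounts to quotienting by the two-sided ideal generated by the
seven elements `a*b − q⁻¹•(b*a)`, `a*c − q⁻¹•(c*a)`, `d*b − q•(b*d)`, `d*c − q•(c*d)`,
`c*b − b*c`, `a*d − 1 − q⁻¹•(b*c)`, `d*a − 1 − q•(b*c)`. -/
inductive SL2Rel (q : ℂ) : FreeAlgebra ℂ (Fin 4) → FreeAlgebra ℂ (Fin 4) → Prop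
  | ab : SL2Rel q (genA * genB) (q⁻¹ • (genB * genA))
  | ac : SL2Rel q (genA * genC) (q⁻¹ • (genC * genA))
  | db : SL2Rel q (genD * genB) (q • (genB * genD))
  | dc : SL2Rel q (genD * genC) (q • (genC * genD))
  | cb : SL2Rel q (genC * genB) (genB * genC)
  | ad : SL2Rel q (genA * genD) (1 + q⁻¹ • (genB * genC))
  | da : SL2Rel q (genD * genA) (1 + q • (genB * genC))

/-- The quantized coordinate ring `A_q = ℂ_q[SL₂]`. -/
def Aq (q : ℂ) := RingQuot (SL2Rel q)

instance (q : ℂ) : Ring (Aq q) := inferInstanceAs (Ring (RingQuot (SL2Rel q)))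
instance (q : ℂ) : Algebra ℂ (Aq q) := inferInstanceAs (Algebra ℂ (RingQuot (SL2Rel q)))

/-- The canonical projection onto the quotient. -/
def projAq (q : ℂ) : FreeAlgebra ℂ (Fin 4) →ₐ[ℂ] Aq q := RingQuot.mkAlgHom ℂ (SL2Rel q)

/-! ### Auxiliary development -/

namespace AqAux

variable (q : ℂ)

/-- image of `a` -/
def Xa : Aq q := projAq q genA
/-- image of `b` -/
def Xb : Aq q := projAq q genB
/-- image of `c` -/
def Xc : Aq q := projAq q genC
/-- image of `d` -/
def Xd : Aq q := projAq q genD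

lemma rel_ab : Xa q * Xb q = q⁻¹ • (Xb q * Xa q) := by
  have h := RingQuot.mkAlgHom_rel ℂ (SL2Rel.ab (q := q))
  simp [Xa, Xb, projAq, map_mul, map_smul] at h ⊢
  exact h

lemma rel_ac : Xa q * Xc q = q⁻¹ • (Xc q * Xa q) := by
  have h := RingQuot.mkAlgHom_rel ℂ (SL2Rel.ac (q := q))
  simp [Xa, Xc, projAq, map_mul, map_smul] at h ⊢
  exact h

lemma rel_db : Xd q * Xb q = q • (Xb q * Xd q) := by
  have h := RingQuot.mkAlgHom_rel ℂ (SL2Rel.db (q := q))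
  simp [Xd, Xb, projAq, map_mul, map_smul] at h ⊢
  exact h

lemma rel_dc : Xd q * Xc q = q • (Xc q * Xd q) := by
  have h := RingQuot.mkAlgHom_rel ℂ (SL2Rel.dc (q := q))
  simp [Xd, Xc, projAq, map_mul, map_smul] at h ⊢
  exact h

lemma rel_cb : Xc q * Xb q = Xb q * Xc q := by
  have h := RingQuot.mkAlgHom_rel ℂ (SL2Rel.cb (q := q))
  simp [Xc, Xb, projAq, map_mul] at h ⊢
  exact h

lemma rel_ad : Xa q * Xd q = 1 + q⁻¹ • (Xb q * Xc q) := by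
  have h := RingQuot.mkAlgHom_rel ℂ (SL2Rel.ad (q := q))
  simp [Xa, Xd, Xb, Xc, projAq, map_mul, map_smul, map_add, map_one] at h ⊢
  exact h

lemma rel_da : Xd q * Xa q = 1 + q • (Xb q * Xc q) := by
  have h := RingQuot.mkAlgHom_rel ℂ (SL2Rel.da (q := q))
  simp [Xa, Xd, Xb, Xc, projAq, map_mul, map_smul, map_add, map_one] at h ⊢
  exact h

variable {q} (hq : q ≠ 0)
include hq

lemma rel_ba : Xb q * Xa q = q • (Xa q * Xb q) := by
  rw [rel_ab, smul_smul, mul_inv_cancel₀ hq, one_smul]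

lemma rel_ca : Xc q * Xa q = q • (Xa q * Xc q) := by
  rw [rel_ac, smul_smul, mul_inv_cancel₀ hq, one_smul]

lemma rel_bc : Xb q * Xc q = q • (Xa q * Xd q) - q • 1 := by
  rw [rel_ad, smul_add, smul_smul, mul_inv_cancel₀ hq, one_smul]
  abel

lemma pow_ba (i : ℕ) : Xb q * Xa q ^ i = q ^ i • (Xa q ^ i * Xb q) := by
  induction i with
  | zero => simp
  | succ n ih =>
      rw [pow_succ, ← mul_assoc, ih, smul_mul_assoc, mul_assoc, rel_ba hq,
        mul_smul_comm, smul_smul, ← pow_succ, ← mul_assoc, ← pow_succ]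

lemma pow_ca (i : ℕ) : Xc q * Xa q ^ i = q ^ i • (Xa q ^ i * Xc q) := by
  induction i with
  | zero => simp
  | succ n ih =>
      rw [pow_succ, ← mul_assoc, ih, smul_mul_assoc, mul_assoc, rel_ca hq,
        mul_smul_comm, smul_smul, ← pow_succ, ← mul_assoc, ← pow_succ]

omit hq

lemma pow_db (j : ℕ) : Xd q * Xb q ^ j = q ^ j • (Xb q ^ j * Xd q) := by
  induction j with
  | zero => simp
  | succ n ih =>
      rw [pow_succ', ← mul_assoc, rel_db, smul_mul_assoc, mul_assoc, ih,
        mul_smul_comm, smul_smul, ← mul_assoc, ← pow_succ']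

lemma pow_dc (j : ℕ) : Xd q * Xc q ^ j = q ^ j • (Xc q ^ j * Xd q) := by
  induction j with
  | zero => simp
  | succ n ih =>
      rw [pow_succ', ← mul_assoc, rel_dc, smul_mul_assoc, mul_assoc, ih,
        mul_smul_comm, smul_smul, ← mul_assoc, ← pow_succ']

include hq

/-- `(b*c) * b^j` reduced. -/
lemma bc_mul_bpow (j : ℕ) :
    (Xb q * Xc q) * Xb q ^ j = q ^ (j + 1) • (Xa q * Xb q ^ j * Xd q) - q • Xb q ^ j := by
  rw [rel_bc hq, sub_mul, smul_mul_assoc, smul_mul_assoc, one_mul, mul_assoc, pow_db,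
    mul_smul_comm, smul_smul, ← mul_assoc, ← pow_succ']

/-- `(b*c) * c^j` reduced. -/
lemma bc_mul_cpow (j : ℕ) :
    (Xb q * Xc q) * Xc q ^ j = q ^ (j + 1) • (Xa q * Xc q ^ j * Xd q) - q • Xc q ^ j := by
  rw [rel_bc hq, sub_mul, smul_mul_assoc, smul_mul_assoc, one_mul, mul_assoc, pow_dc,
    mul_smul_comm, smul_smul, ← mul_assoc, ← pow_succ']

/-- `d * a^(i+1)` reduced. -/
lemma da_pow (i : ℕ) :
    Xd q * Xa q ^ (i + 1) = Xa q ^ i + q ^ (2 * i + 1) • (Xa q ^ i * Xb q * Xc q) := by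
  rw [pow_succ' (Xa q) i, ← mul_assoc, rel_da, add_mul, one_mul, smul_mul_assoc,
    mul_assoc, pow_ca hq, mul_smul_comm, ← mul_assoc, pow_ba hq, smul_mul_assoc,
    smul_smul, smul_smul]
  rw [show q * q ^ i * q ^ i = q ^ (2 * i + 1) by ring]

omit hq

/-- a reassociation helper -/
lemma reassoc1 (x : Aq q) (i k : ℕ) :
    Xa q ^ i * (Xa q * x * Xd q) * Xd q ^ k = Xa q ^ (i + 1) * x * Xd q ^ (k + 1) := by
  rw [pow_succ (Xa q) i, pow_succ' (Xd q) k]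
  simp only [mul_assoc]

end AqAux

open AqAux

section SpanProof

variable (q : ℂ)

/-- The spanning set. -/
def Sset : Set (Aq q) :=
  {x : Aq q | ∃ i j k : ℕ, x = projAq q (genA ^ i * genB ^ j * genD ^ k)} ∪
  {x : Aq q | ∃ i j k : ℕ, x = projAq q (genA ^ i * genC ^ j * genD ^ k)}

lemma M1_mem (i j k : ℕ) :
    Xa q ^ i * Xb q ^ j * Xd q ^ k ∈ Submodule.span ℂ (Sset q) :=
  Submodule.subset_span (Or.inl ⟨i, j, k, by simp [Xa, Xb, Xd, map_mul, map_pow]⟩)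

lemma M2_mem (i j k : ℕ) :
    Xa q ^ i * Xc q ^ j * Xd q ^ k ∈ Submodule.span ℂ (Sset q) :=
  Submodule.subset_span (Or.inr ⟨i, j, k, by simp [Xa, Xc, Xd, map_mul, map_pow]⟩)

variable {q}

lemma mulXa_M1 (i j k : ℕ) :
    Xa q * (Xa q ^ i * Xb q ^ j * Xd q ^ k) ∈ Submodule.span ℂ (Sset q) := by
  rw [← mul_assoc, ← mul_assoc, ← pow_succ']
  exact M1_mem q (i + 1) j k

lemma mulXa_M2 (i j k : ℕ) :
    Xa q * (Xa q ^ i * Xc q ^ j * Xd q ^ k) ∈ Submodule.span ℂ (Sset q) := by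
  rw [← mul_assoc, ← mul_assoc, ← pow_succ']
  exact M2_mem q (i + 1) j k

variable (hq : q ≠ 0)
include hq

lemma mulXb_M1 (i j k : ℕ) :
    Xb q * (Xa q ^ i * Xb q ^ j * Xd q ^ k) ∈ Submodule.span ℂ (Sset q) := by
  rw [← mul_assoc, ← mul_assoc, pow_ba hq, smul_mul_assoc, smul_mul_assoc,
    mul_assoc (Xa q ^ i), ← pow_succ']
  exact Submodule.smul_mem _ _ (M1_mem q i (j + 1) k)

lemma mulXc_M2 (i j k : ℕ) :
    Xc q * (Xa q ^ i * Xc q ^ j * Xd q ^ k) ∈ Submodule.span ℂ (Sset q) := by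
  rw [← mul_assoc, ← mul_assoc, pow_ca hq, smul_mul_assoc, smul_mul_assoc,
    mul_assoc (Xa q ^ i), ← pow_succ']
  exact Submodule.smul_mem _ _ (M2_mem q i (j + 1) k)

lemma mulXb_M2 (i j k : ℕ) :
    Xb q * (Xa q ^ i * Xc q ^ j * Xd q ^ k) ∈ Submodule.span ℂ (Sset q) := by
  cases j with
  | zero =>
      simp only [pow_zero, mul_one]
      rw [← mul_assoc, pow_ba hq, smul_mul_assoc]
      exact Submodule.smul_mem _ _ (by simpa using M1_mem q i 1 k)
  | succ n =>
      rw [← mul_assoc, ← mul_assoc, pow_ba hq, smul_mul_assoc, smul_mul_assoc,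
        mul_assoc (Xa q ^ i), pow_succ' (Xc q) n, ← mul_assoc (Xb q),
        bc_mul_cpow hq, mul_sub, sub_mul, mul_smul_comm, smul_mul_assoc,
        reassoc1, mul_smul_comm, smul_mul_assoc]
      exact Submodule.smul_mem _ _ (sub_mem
        (Submodule.smul_mem _ _ (M2_mem q (i + 1) n (k + 1)))
        (Submodule.smul_mem _ _ (M2_mem q i n k)))

lemma mulXc_M1 (i j k : ℕ) :
    Xc q * (Xa q ^ i * Xb q ^ j * Xd q ^ k) ∈ Submodule.span ℂ (Sset q) := by
  cases j with
  | zero =>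
      simp only [pow_zero, mul_one]
      rw [← mul_assoc, pow_ca hq, smul_mul_assoc]
      exact Submodule.smul_mem _ _ (by simpa using M2_mem q i 1 k)
  | succ n =>
      rw [← mul_assoc, ← mul_assoc, pow_ca hq, smul_mul_assoc, smul_mul_assoc,
        mul_assoc (Xa q ^ i), pow_succ' (Xb q) n, ← mul_assoc (Xc q), rel_cb,
        bc_mul_bpow hq, mul_sub, sub_mul, mul_smul_comm, smul_mul_assoc,
        reassoc1, mul_smul_comm, smul_mul_assoc]
      exact Submodule.smul_mem _ _ (sub_mem
        (Submodule.smul_mem _ _ (M1_mem q (i + 1) n (k + 1)))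
        (Submodule.smul_mem _ _ (M1_mem q i n k)))

lemma mulXd_M1 (i j k : ℕ) :
    Xd q * (Xa q ^ i * Xb q ^ j * Xd q ^ k) ∈ Submodule.span ℂ (Sset q) := by
  cases i with
  | zero =>
      simp only [pow_zero, one_mul]
      rw [← mul_assoc, pow_db, smul_mul_assoc, mul_assoc, ← pow_succ']
      exact Submodule.smul_mem _ _ (by simpa using M1_mem q 0 j (k + 1))
  | succ n =>
      rw [← mul_assoc, ← mul_assoc, da_pow hq, add_mul, add_mul, smul_mul_assoc,
        smul_mul_assoc, mul_assoc (Xa q ^ n) (Xb q) (Xc q),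
        mul_assoc (Xa q ^ n) (Xb q * Xc q) (Xb q ^ j), bc_mul_bpow hq,
        mul_sub, sub_mul, mul_smul_comm, smul_mul_assoc, reassoc1,
        mul_smul_comm, smul_mul_assoc]
      exact add_mem (M1_mem q n j k) (Submodule.smul_mem _ _ (sub_mem
        (Submodule.smul_mem _ _ (M1_mem q (n + 1) j (k + 1)))
        (Submodule.smul_mem _ _ (M1_mem q n j k))))

lemma mulXd_M2 (i j k : ℕ) :
    Xd q * (Xa q ^ i * Xc q ^ j * Xd q ^ k) ∈ Submodule.span ℂ (Sset q) := by
  cases i with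
  | zero =>
      simp only [pow_zero, one_mul]
      rw [← mul_assoc, pow_dc, smul_mul_assoc, mul_assoc, ← pow_succ']
      exact Submodule.smul_mem _ _ (by simpa using M2_mem q 0 j (k + 1))
  | succ n =>
      rw [← mul_assoc, ← mul_assoc, da_pow hq, add_mul, add_mul, smul_mul_assoc,
        smul_mul_assoc, mul_assoc (Xa q ^ n) (Xb q) (Xc q),
        mul_assoc (Xa q ^ n) (Xb q * Xc q) (Xc q ^ j), bc_mul_cpow hq,
        mul_sub, sub_mul, mul_smul_comm, smul_mul_assoc, reassoc1,
        mul_smul_comm, smul_mul_assoc]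
      exact add_mem (M2_mem q n j k) (Submodule.smul_mem _ _ (sub_mem
        (Submodule.smul_mem _ _ (M2_mem q (n + 1) j (k + 1)))
        (Submodule.smul_mem _ _ (M2_mem q n j k))))

end SpanProof

/-- `A_q` is spanned as a `ℂ`-vector space by the images of the monomials
`aⁱ bʲ dᵏ` together with the images of the monomials `aⁱ cʲ dᵏ`. -/
theorem Aq_spanned_by_pbw_monomials (q : ℂ) (hq : q ≠ 0) :
    Submodule.span ℂ
      ({x : Aq q | ∃ i j k : ℕ, x = projAq q (genA ^ i * genB ^ j * genD ^ k)} ∪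
       {x : Aq q | ∃ i j k : ℕ, x = projAq q (genA ^ i * genC ^ j * genD ^ k)}) = ⊤ := by
  show Submodule.span ℂ (Sset q) = ⊤
  have hset : ∀ g : Fin 4, ∀ z ∈ Sset q,
      projAq q (FreeAlgebra.ι ℂ g) * z ∈ Submodule.span ℂ (Sset q) := by
    intro g z hz
    rcases hz with ⟨i, j, k, rfl⟩ | ⟨i, j, k, rfl⟩
    · rw [show (projAq q) (genA ^ i * genB ^ j * genD ^ k) =
          Xa q ^ i * Xb q ^ j * Xd q ^ k from by
        simp [AqAux.Xa, AqAux.Xb, AqAux.Xd, map_mul, map_pow]]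
      fin_cases g
      · exact mulXa_M1 i j k
      · exact mulXb_M1 hq i j k
      · exact mulXc_M1 hq i j k
      · exact mulXd_M1 hq i j k
    · rw [show (projAq q) (genA ^ i * genC ^ j * genD ^ k) =
          Xa q ^ i * Xc q ^ j * Xd q ^ k from by
        simp [AqAux.Xa, AqAux.Xc, AqAux.Xd, map_mul, map_pow]]
      fin_cases g
      · exact mulXa_M2 i j k
      · exact mulXb_M2 hq i j k
      · exact mulXc_M2 hq i j k
      · exact mulXd_M2 hq i j k
  have key : ∀ y : FreeAlgebra ℂ (Fin 4), ∀ z ∈ Submodule.span ℂ (Sset q),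
      projAq q y * z ∈ Submodule.span ℂ (Sset q) := by
    intro y
    induction y using FreeAlgebra.induction with
    | grade0 r =>
        intro z hz
        rw [AlgHom.commutes, ← Algebra.smul_def]
        exact Submodule.smul_mem _ _ hz
    | grade1 g =>
        intro z hz
        induction hz using Submodule.span_induction with
        | mem x hx => exact hset g x hx
        | zero => rw [mul_zero]; exact Submodule.zero_mem _
        | add x y hx hy px py => rw [mul_add]; exact add_mem px py
        | smul a x hx px => rw [mul_smul_comm]; exact Submodule.smul_mem _ _ px
    | mul x y ihx ihy =>
        intro z hz
        rw [map_mul, mul_assoc]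
        exact ihx _ (ihy z hz)
    | add x y ihx ihy =>
        intro z hz
        rw [map_add, add_mul]
        exact add_mem (ihx z hz) (ihy z hz)
  rw [eq_top_iff]
  rintro x -
  obtain ⟨y, rfl⟩ := RingQuot.mkAlgHom_surjective ℂ (SL2Rel q) x
  have h1 : (1 : Aq q) ∈ Submodule.span ℂ (Sset q) := by simpa using M1_mem q 0 0 0
  have hk := key y 1 h1
  simp only [projAq, mul_one] at hk
  exact hk

end
end

section
/- Let N ≥ 1 be a natural number. Then A_q is generated, as a left module over the unital ℂ-subalgebra of A_q generated by aᴺ, bᴺ, cᴺ and dᴺ, by the finite set { aⁱ * bʲ * dᵏ : 0 ≤ i, j, k ≤ N−1 } ∪ { aⁱ * cʲ * dᵏ : 0 ≤ i, j, k ≤ N−1 }; that is, every element of A_q is a finite sum of elements z * s with z in that subalgebra and s in that finite set. -/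
noncomputable section

/-! ### Generic q-commutation lemmas -/

section Generic

variable {R : Type*} [Ring R] [Algebra ℂ R]

theorem qc_single {x y : R} {t : ℂ} (h : y * x = t • (x * y)) :
    ∀ m : ℕ, y ^ m * x = t ^ m • (x * y ^ m)
  | 0 => by simp
  | (m + 1) => by
    rw [pow_succ, mul_assoc, h, mul_smul_comm, ← mul_assoc, qc_single h m, smul_mul_assoc,
      smul_smul, mul_assoc, ← pow_succ, ← pow_succ']

theorem qc_single' {x y : R} {t : ℂ} (h : y * x = t • (x * y)) :
    ∀ i : ℕ, y * x ^ i = t ^ i • (x ^ i * y)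
  | 0 => by simp
  | (i + 1) => by
    rw [pow_succ, ← mul_assoc, qc_single' h i, smul_mul_assoc, mul_assoc, h, mul_smul_comm,
      smul_smul, ← mul_assoc, ← pow_succ]

theorem qc_pow {x y : R} {t : ℂ} (h : y * x = t • (x * y)) (m : ℕ) :
    ∀ i : ℕ, y ^ m * x ^ i = t ^ (m * i) • (x ^ i * y ^ m)
  | 0 => by simp
  | (i + 1) => by
    rw [pow_succ, ← mul_assoc, qc_pow h m i, smul_mul_assoc, mul_assoc, qc_single h m,
      mul_smul_comm, smul_smul, ← mul_assoc, ← pow_succ, ← pow_add]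
    congr 1

theorem qc_inv {x y : R} {t : ℂ} (h : y * x = t • (x * y)) (ht : t ≠ 0) (m i : ℕ) :
    x ^ i * y ^ m = (t ^ (m * i))⁻¹ • (y ^ m * x ^ i) := by
  rw [eq_inv_smul_iff₀ (pow_ne_zero _ ht), qc_pow h m i]

theorem skew_right {x y : R} {v : ℂ} (h : x * y = v • (y * x) + (1 - v) • 1) :
    ∀ k : ℕ, x * y ^ (k + 1) = v ^ (k + 1) • (y ^ (k + 1) * x) + (1 - v ^ (k + 1)) • y ^ k
  | 0 => by simpa using h
  | (k + 1) => by
    rw [pow_succ, ← mul_assoc, skew_right h k, add_mul, smul_mul_assoc, smul_mul_assoc,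
      mul_assoc, h, ← pow_succ, mul_add, mul_smul_comm, mul_smul_comm, mul_one, ← mul_assoc,
      ← pow_succ]
    rw [smul_add, smul_smul, smul_smul, add_assoc, ← add_smul, ← pow_succ]
    congr 2
    ring

theorem skew_left {x y : R} {v : ℂ} (h : x * y = v • (y * x) + (1 - v) • 1) :
    ∀ k : ℕ, x ^ (k + 1) * y = v ^ (k + 1) • (y * x ^ (k + 1)) + (1 - v ^ (k + 1)) • x ^ k
  | 0 => by simpa using h
  | (k + 1) => by
    rw [pow_succ', mul_assoc, skew_left h k, mul_add, mul_smul_comm, mul_smul_comm,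
      ← mul_assoc, h, ← pow_succ', add_mul, smul_mul_assoc, smul_mul_assoc, one_mul,
      mul_assoc, ← pow_succ']
    rw [smul_add, smul_smul, smul_smul, add_assoc, ← add_smul, ← pow_succ]
    congr 2
    ring

end Generic

/-! ### The images of the generators and the relations in `A_q` -/

/-- image of `a` in `A_q`. -/
def pA (q : ℂ) : Aq q := projAq q genA
/-- image of `b` in `A_q`. -/
def pB (q : ℂ) : Aq q := projAq q genB
/-- image of `c` in `A_q`. -/
def pC (q : ℂ) : Aq q := projAq q genC
/-- image of `d` in `A_q`. -/
def pD (q : ℂ) : Aq q := projAq q genD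

section Rels

variable (q : ℂ)

theorem relAB : pA q * pB q = q⁻¹ • (pB q * pA q) := by
  have h := RingQuot.mkAlgHom_rel ℂ (SL2Rel.ab (q := q))
  simp only [map_mul, map_smul, map_add, map_one] at h
  exact h

theorem relAC : pA q * pC q = q⁻¹ • (pC q * pA q) := by
  have h := RingQuot.mkAlgHom_rel ℂ (SL2Rel.ac (q := q))
  simp only [map_mul, map_smul, map_add, map_one] at h
  exact h

theorem hDB : pD q * pB q = q • (pB q * pD q) := by
  have h := RingQuot.mkAlgHom_rel ℂ (SL2Rel.db (q := q))
  simp only [map_mul, map_smul, map_add, map_one] at h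
  exact h

theorem hDC : pD q * pC q = q • (pC q * pD q) := by
  have h := RingQuot.mkAlgHom_rel ℂ (SL2Rel.dc (q := q))
  simp only [map_mul, map_smul, map_add, map_one] at h
  exact h

theorem hCB : pC q * pB q = pB q * pC q := by
  have h := RingQuot.mkAlgHom_rel ℂ (SL2Rel.cb (q := q))
  simp only [map_mul, map_smul, map_add, map_one] at h
  exact h

theorem hAD : pA q * pD q = 1 + q⁻¹ • (pB q * pC q) := by
  have h := RingQuot.mkAlgHom_rel ℂ (SL2Rel.ad (q := q))
  simp only [map_mul, map_smul, map_add, map_one] at h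
  exact h

theorem hDA : pD q * pA q = 1 + q • (pB q * pC q) := by
  have h := RingQuot.mkAlgHom_rel ℂ (SL2Rel.da (q := q))
  simp only [map_mul, map_smul, map_add, map_one] at h
  exact h

variable {q}

theorem hBA (hq : q ≠ 0) : pB q * pA q = q • (pA q * pB q) := by
  rw [relAB q, smul_smul, mul_inv_cancel₀ hq, one_smul]

theorem hCA (hq : q ≠ 0) : pC q * pA q = q • (pA q * pC q) := by
  rw [relAC q, smul_smul, mul_inv_cancel₀ hq, one_smul]

theorem hBC (hq : q ≠ 0) : pB q * pC q = q • (pA q * pD q) - q • 1 := by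
  rw [hAD q, smul_add, smul_smul, mul_inv_cancel₀ hq, one_smul]
  abel

theorem hADskew (hq : q ≠ 0) : pA q * pD q = (q⁻¹ * q⁻¹) • (pD q * pA q) + (1 - q⁻¹ * q⁻¹) • 1 := by
  have hbc : pB q * pC q = q⁻¹ • (pD q * pA q) - q⁻¹ • 1 := by
    rw [hDA q, smul_add, smul_smul, inv_mul_cancel₀ hq, one_smul]
    abel
  rw [hAD q, hbc, smul_sub, smul_smul, smul_smul]
  module

theorem hDAskew (hq : q ≠ 0) : pD q * pA q = (q * q) • (pA q * pD q) + (1 - q * q) • 1 := by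
  rw [hDA q, hBC hq, smul_sub, smul_smul, smul_smul]
  module

end Rels

/-! ### The submonoid `MM` and basic membership lemmas -/

/-- The additive submonoid generated by the products `z * s`. -/
def MM (q : ℂ) (N : ℕ) : AddSubmonoid (Aq q) :=
  AddSubmonoid.closure
      {y : Aq q |
        ∃ z ∈ Algebra.adjoin ℂ ({projAq q (genA ^ N), projAq q (genB ^ N),
            projAq q (genC ^ N), projAq q (genD ^ N)} : Set (Aq q)),
        ∃ s ∈ ({x : Aq q | ∃ i j k : ℕ, i ≤ N - 1 ∧ j ≤ N - 1 ∧ k ≤ N - 1 ∧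
                  x = projAq q (genA ^ i * genB ^ j * genD ^ k)} ∪
               {x : Aq q | ∃ i j k : ℕ, i ≤ N - 1 ∧ j ≤ N - 1 ∧ k ≤ N - 1 ∧
                  x = projAq q (genA ^ i * genC ^ j * genD ^ k)} : Set (Aq q)),
        y = z * s}

section MMLemmas

variable (q : ℂ) (N : ℕ)

/-- the coefficient subalgebra -/
def ZZ : Subalgebra ℂ (Aq q) :=
  Algebra.adjoin ℂ ({projAq q (genA ^ N), projAq q (genB ^ N),
    projAq q (genC ^ N), projAq q (genD ^ N)} : Set (Aq q))

theorem pApow_mem : pA q ^ N ∈ ZZ q N := by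
  show projAq q genA ^ N ∈ _
  rw [← map_pow]
  exact Algebra.subset_adjoin (by simp)

theorem pBpow_mem : pB q ^ N ∈ ZZ q N := by
  show projAq q genB ^ N ∈ _
  rw [← map_pow]
  exact Algebra.subset_adjoin (by simp)

theorem pCpow_mem : pC q ^ N ∈ ZZ q N := by
  show projAq q genC ^ N ∈ _
  rw [← map_pow]
  exact Algebra.subset_adjoin (by simp)

theorem pDpow_mem : pD q ^ N ∈ ZZ q N := by
  show projAq q genD ^ N ∈ _
  rw [← map_pow]
  exact Algebra.subset_adjoin (by simp)

theorem mmSmul (r : ℂ) {y : Aq q} (hy : y ∈ MM q N) : r • y ∈ MM q N := by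
  induction hy using AddSubmonoid.closure_induction with
  | mem s hs =>
    obtain ⟨z, hz, t, ht, rfl⟩ := hs
    exact AddSubmonoid.subset_closure
      ⟨r • z, (ZZ q N).smul_mem hz r, t, ht, (smul_mul_assoc r z t).symm⟩
  | zero => simpa using zero_mem (MM q N)
  | add a b ha hb iha ihb =>
    rw [smul_add]
    exact add_mem iha ihb

theorem mmZmul {z y : Aq q} (hz : z ∈ ZZ q N) (hy : y ∈ MM q N) : z * y ∈ MM q N := by
  induction hy using AddSubmonoid.closure_induction with
  | mem s hs =>
    obtain ⟨z', hz', t, ht, rfl⟩ := hs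
    exact AddSubmonoid.subset_closure
      ⟨z * z', mul_mem hz hz', t, ht, (mul_assoc z z' t).symm⟩
  | zero => simpa using zero_mem (MM q N)
  | add a b ha hb iha ihb =>
    rw [mul_add]
    exact add_mem iha ihb

theorem mmSub {y₁ y₂ : Aq q} (h1 : y₁ ∈ MM q N) (h2 : y₂ ∈ MM q N) : y₁ - y₂ ∈ MM q N := by
  have := add_mem h1 (mmSmul q N (-1 : ℂ) h2)
  simpa [neg_one_smul, ← sub_eq_add_neg] using this

theorem monoB_mem {i j k : ℕ} (hi : i ≤ N - 1) (hj : j ≤ N - 1) (hk : k ≤ N - 1) :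
    pA q ^ i * (pB q ^ j * pD q ^ k) ∈ MM q N :=
  AddSubmonoid.subset_closure
    ⟨1, one_mem _, pA q ^ i * (pB q ^ j * pD q ^ k),
      Or.inl ⟨i, j, k, hi, hj, hk, by simp [pA, pB, pD, map_mul, map_pow, mul_assoc]⟩,
      (one_mul _).symm⟩

theorem monoC_mem {i j k : ℕ} (hi : i ≤ N - 1) (hj : j ≤ N - 1) (hk : k ≤ N - 1) :
    pA q ^ i * (pC q ^ j * pD q ^ k) ∈ MM q N :=
  AddSubmonoid.subset_closure
    ⟨1, one_mem _, pA q ^ i * (pC q ^ j * pD q ^ k),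
      Or.inr ⟨i, j, k, hi, hj, hk, by simp [pA, pC, pD, map_mul, map_pow, mul_assoc]⟩,
      (one_mul _).symm⟩

theorem monoAB {a b k : ℕ} (ha : a ≤ N) (hb : b ≤ N - 1) (hk : k ≤ N - 1) :
    pA q ^ a * (pB q ^ b * pD q ^ k) ∈ MM q N := by
  rcases eq_or_lt_of_le ha with rfl | h
  · have h0 := mmZmul q a (pApow_mem q a) (monoB_mem q a (Nat.zero_le _) hb hk)
    simpa using h0
  · exact monoB_mem q N (by omega) hb hk

theorem monoAC {a b k : ℕ} (ha : a ≤ N) (hb : b ≤ N - 1) (hk : k ≤ N - 1) :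
    pA q ^ a * (pC q ^ b * pD q ^ k) ∈ MM q N := by
  rcases eq_or_lt_of_le ha with rfl | h
  · have h0 := mmZmul q a (pApow_mem q a) (monoC_mem q a (Nat.zero_le _) hb hk)
    simpa using h0
  · exact monoC_mem q N (by omega) hb hk

end MMLemmas

/-! ### Step lemmas (commutation with context) -/

section Steps

variable {q : ℂ}

theorem sBA (hq : q ≠ 0) (j : ℕ) : pB q ^ j * pA q = q ^ j • (pA q * pB q ^ j) := qc_single (hBA hq) j

theorem sCA (hq : q ≠ 0) (j : ℕ) : pC q ^ j * pA q = q ^ j • (pA q * pC q ^ j) := qc_single (hCA hq) j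

theorem sDBp (k : ℕ) : pD q ^ k * pB q = q ^ k • (pB q * pD q ^ k) := qc_single (hDB q) k

theorem sDCp (k : ℕ) : pD q ^ k * pC q = q ^ k • (pC q * pD q ^ k) := qc_single (hDC q) k

theorem sDBpow (m i : ℕ) : pD q ^ m * pB q ^ i = q ^ (m * i) • (pB q ^ i * pD q ^ m) :=
  qc_pow (hDB q) m i

theorem sDCpow (m i : ℕ) : pD q ^ m * pC q ^ i = q ^ (m * i) • (pC q ^ i * pD q ^ m) :=
  qc_pow (hDC q) m i

theorem sBDinv (hq : q ≠ 0) (b m : ℕ) : pB q ^ b * pD q ^ m = (q ^ (m * b))⁻¹ • (pD q ^ m * pB q ^ b) :=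
  qc_inv (hDB q) hq m b

theorem sCDinv (hq : q ≠ 0) (b m : ℕ) : pC q ^ b * pD q ^ m = (q ^ (m * b))⁻¹ • (pD q ^ m * pC q ^ b) :=
  qc_inv (hDC q) hq m b

theorem sABinv (hq : q ≠ 0) (i m : ℕ) : pA q ^ i * pB q ^ m = (q ^ (m * i))⁻¹ • (pB q ^ m * pA q ^ i) :=
  qc_inv (hBA hq) hq m i

theorem sACinv (hq : q ≠ 0) (i m : ℕ) : pA q ^ i * pC q ^ m = (q ^ (m * i))⁻¹ • (pC q ^ m * pA q ^ i) :=
  qc_inv (hCA hq) hq m i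

theorem sDA (hq : q ≠ 0) (k : ℕ) :
    pD q ^ (k + 1) * pA q
      = (q * q) ^ (k + 1) • (pA q * pD q ^ (k + 1)) + (1 - (q * q) ^ (k + 1)) • pD q ^ k :=
  skew_left (hDAskew hq) k

/-- context versions -/
theorem cBA (hq : q ≠ 0) (j : ℕ) (x : Aq q) :
    pB q ^ j * (pA q * x) = q ^ j • (pA q * (pB q ^ j * x)) := by
  rw [← mul_assoc, sBA hq j, smul_mul_assoc, mul_assoc]

theorem cCA (hq : q ≠ 0) (j : ℕ) (x : Aq q) :
    pC q ^ j * (pA q * x) = q ^ j • (pA q * (pC q ^ j * x)) := by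
  rw [← mul_assoc, sCA hq j, smul_mul_assoc, mul_assoc]

theorem cDb (j : ℕ) (x : Aq q) :
    pD q * (pB q ^ j * x) = q ^ j • (pB q ^ j * (pD q * x)) := by
  rw [← mul_assoc, qc_single' (hDB q) j, smul_mul_assoc, mul_assoc]

theorem cDc (j : ℕ) (x : Aq q) :
    pD q * (pC q ^ j * x) = q ^ j • (pC q ^ j * (pD q * x)) := by
  rw [← mul_assoc, qc_single' (hDC q) j, smul_mul_assoc, mul_assoc]

theorem cAB (hq : q ≠ 0) (i m : ℕ) (x : Aq q) :
    pA q ^ i * (pB q ^ m * x) = (q ^ (m * i))⁻¹ • (pB q ^ m * (pA q ^ i * x)) := by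
  rw [← mul_assoc, sABinv hq i m, smul_mul_assoc, mul_assoc]

theorem cAC (hq : q ≠ 0) (i m : ℕ) (x : Aq q) :
    pA q ^ i * (pC q ^ m * x) = (q ^ (m * i))⁻¹ • (pC q ^ m * (pA q ^ i * x)) := by
  rw [← mul_assoc, sACinv hq i m, smul_mul_assoc, mul_assoc]

theorem cDA (hq : q ≠ 0) (k : ℕ) (x : Aq q) :
    pD q ^ (k + 1) * (pA q * x)
      = (q * q) ^ (k + 1) • (pA q * (pD q ^ (k + 1) * x))
        + (1 - (q * q) ^ (k + 1)) • (pD q ^ k * x) := by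
  rw [← mul_assoc, sDA hq k, add_mul, smul_mul_assoc, smul_mul_assoc, mul_assoc]

theorem cAD (hq : q ≠ 0) (k : ℕ) (x : Aq q) :
    pA q * (pD q ^ (k + 1) * x)
      = (q⁻¹ * q⁻¹) ^ (k + 1) • (pD q ^ (k + 1) * (pA q * x))
        + (1 - (q⁻¹ * q⁻¹) ^ (k + 1)) • (pD q ^ k * x) := by
  rw [← mul_assoc, skew_right (hADskew hq) k, add_mul, smul_mul_assoc, smul_mul_assoc,
    mul_assoc]

theorem cAb (hq : q ≠ 0) (b : ℕ) (x : Aq q) :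
    pA q * (pB q ^ b * x) = (q ^ b)⁻¹ • (pB q ^ b * (pA q * x)) := by
  have h : pA q * pB q ^ b = (q ^ b)⁻¹ • (pB q ^ b * pA q) := by
    rw [eq_inv_smul_iff₀ (pow_ne_zero _ hq), qc_single (hBA hq) b]
  rw [← mul_assoc, h, smul_mul_assoc, mul_assoc]

theorem cCjB (j : ℕ) (x : Aq q) : pC q ^ j * (pB q * x) = pB q * (pC q ^ j * x) := by
  have h : Commute (pC q) (pB q) := hCB q
  rw [← mul_assoc, (h.pow_left j).eq, mul_assoc]

theorem cBjC (j : ℕ) (x : Aq q) : pB q ^ j * (pC q * x) = pC q * (pB q ^ j * x) := by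
  have h : Commute (pB q) (pC q) := (hCB q).symm
  rw [← mul_assoc, (h.pow_left j).eq, mul_assoc]

theorem cBC (hq : q ≠ 0) (x : Aq q) :
    pB q * (pC q * x) = q • (pA q * (pD q * x)) - q • x := by
  rw [← mul_assoc, hBC hq, sub_mul, smul_mul_assoc, smul_mul_assoc, one_mul, mul_assoc]

end Steps

/-! ### Closure under right multiplication by the generators -/

section Main

variable {q : ℂ}

theorem proj_monoB (q : ℂ) (i j k : ℕ) :
    projAq q (genA ^ i * genB ^ j * genD ^ k) = pA q ^ i * (pB q ^ j * pD q ^ k) := by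
  simp [pA, pB, pD, map_mul, map_pow, mul_assoc]

theorem proj_monoC (q : ℂ) (i j k : ℕ) :
    projAq q (genA ^ i * genC ^ j * genD ^ k) = pA q ^ i * (pC q ^ j * pD q ^ k) := by
  simp [pA, pC, pD, map_mul, map_pow, mul_assoc]

theorem mulA (hq : q ≠ 0) (N : ℕ) (hN : 1 ≤ N) {y : Aq q} (hy : y ∈ MM q N) :
    y * pA q ∈ MM q N := by
  induction hy using AddSubmonoid.closure_induction with
  | mem s hs =>
    obtain ⟨z, hz, t, ht, rfl⟩ := hs
    rw [mul_assoc]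
    refine mmZmul q N hz ?_
    rcases ht with ⟨i, j, k, hi, hj, hk, rfl⟩ | ⟨i, j, k, hi, hj, hk, rfl⟩
    · rw [proj_monoB]
      cases k with
      | zero =>
        have he : pA q ^ i * (pB q ^ j * pD q ^ 0) * pA q
            = q ^ j • (pA q ^ (i + 1) * (pB q ^ j * pD q ^ 0)) := by
          rw [pow_zero, mul_one, mul_assoc, sBA hq j, mul_smul_comm, ← mul_assoc,
            ← pow_succ]
        rw [he]
        exact mmSmul q N _ (monoAB q N (by omega) hj (by omega))
      | succ k' =>
        have he : pA q ^ i * (pB q ^ j * pD q ^ (k' + 1)) * pA q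
            = ((q * q) ^ (k' + 1) * q ^ j) • (pA q ^ (i + 1) * (pB q ^ j * pD q ^ (k' + 1)))
              + (1 - (q * q) ^ (k' + 1)) • (pA q ^ i * (pB q ^ j * pD q ^ k')) := by
          rw [mul_assoc, mul_assoc, sDA hq k', mul_add, mul_add]
          simp only [mul_smul_comm]
          rw [cBA hq j]
          simp only [mul_smul_comm, smul_smul]
          rw [← mul_assoc (pA q ^ i) (pA q), ← pow_succ]
        rw [he]
        exact add_mem (mmSmul q N _ (monoAB q N (by omega) hj hk))
          (mmSmul q N _ (monoAB q N (by omega) hj (by omega)))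
    · rw [proj_monoC]
      cases k with
      | zero =>
        have he : pA q ^ i * (pC q ^ j * pD q ^ 0) * pA q
            = q ^ j • (pA q ^ (i + 1) * (pC q ^ j * pD q ^ 0)) := by
          rw [pow_zero, mul_one, mul_assoc, sCA hq j, mul_smul_comm, ← mul_assoc,
            ← pow_succ]
        rw [he]
        exact mmSmul q N _ (monoAC q N (by omega) hj (by omega))
      | succ k' =>
        have he : pA q ^ i * (pC q ^ j * pD q ^ (k' + 1)) * pA q
            = ((q * q) ^ (k' + 1) * q ^ j) • (pA q ^ (i + 1) * (pC q ^ j * pD q ^ (k' + 1)))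
              + (1 - (q * q) ^ (k' + 1)) • (pA q ^ i * (pC q ^ j * pD q ^ k')) := by
          rw [mul_assoc, mul_assoc, sDA hq k', mul_add, mul_add]
          simp only [mul_smul_comm]
          rw [cCA hq j]
          simp only [mul_smul_comm, smul_smul]
          rw [← mul_assoc (pA q ^ i) (pA q), ← pow_succ]
        rw [he]
        exact add_mem (mmSmul q N _ (monoAC q N (by omega) hj hk))
          (mmSmul q N _ (monoAC q N (by omega) hj (by omega)))
  | zero => simpa using zero_mem (MM q N)
  | add a b ha hb iha ihb =>
    rw [add_mul]
    exact add_mem iha ihb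

theorem masterB (hq : q ≠ 0) (N : ℕ) (hN : 1 ≤ N) {a b k : ℕ} (ha : a ≤ N) (hb : b ≤ N - 1)
    (hk : k ≤ N) : pA q ^ a * (pB q ^ b * pD q ^ k) ∈ MM q N := by
  rcases Nat.lt_or_ge k N with h | h
  · exact monoAB q N ha hb (by omega)
  have hkN : k = N := by omega
  subst hkN
  obtain ⟨m, rfl⟩ : ∃ m, k = m + 1 := ⟨k - 1, by omega⟩
  have claim : ∀ a', a' ≤ m + 1 → pA q ^ a' * (pD q ^ (m + 1) * pB q ^ b) ∈ MM q (m + 1) := by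
    intro a'
    induction a' with
    | zero =>
      intro _
      have h0 := mmZmul q (m + 1) (pDpow_mem q (m + 1))
        (monoB_mem q (m + 1) (Nat.zero_le _) hb (Nat.zero_le _))
      simpa using h0
    | succ a ih =>
      intro ha'
      have he : pA q ^ (a + 1) * (pD q ^ (m + 1) * pB q ^ b)
          = ((q⁻¹ * q⁻¹) ^ (m + 1) * (q ^ b)⁻¹) •
              ((pA q ^ a * (pD q ^ (m + 1) * pB q ^ b)) * pA q)
            + ((1 - (q⁻¹ * q⁻¹) ^ (m + 1)) * q ^ (m * b)) •
              (pA q ^ a * (pB q ^ b * pD q ^ m)) := by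
        rw [pow_succ, mul_assoc, cAD hq m (pB q ^ b), mul_add]
        simp only [mul_smul_comm]
        rw [show pA q * pB q ^ b = (q ^ b)⁻¹ • (pB q ^ b * pA q) from by
              rw [eq_inv_smul_iff₀ (pow_ne_zero _ hq), qc_single (hBA hq) b]]
        rw [sDBpow m b]
        simp only [mul_smul_comm, smul_smul]
        rw [mul_assoc (pA q ^ a) (pD q ^ (m + 1) * pB q ^ b) (pA q),
          mul_assoc (pD q ^ (m + 1)) (pB q ^ b) (pA q)]
      rw [he]
      exact add_mem (mmSmul _ _ _ (mulA hq (m + 1) (by omega) (ih (by omega))))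
        (mmSmul _ _ _ (monoAB q (m + 1) (by omega) hb (by omega)))
  have he2 : pA q ^ a * (pB q ^ b * pD q ^ (m + 1))
      = (q ^ ((m + 1) * b))⁻¹ • (pA q ^ a * (pD q ^ (m + 1) * pB q ^ b)) := by
    rw [sBDinv hq b (m + 1), mul_smul_comm]
  rw [he2]
  exact mmSmul _ _ _ (claim a ha)

theorem masterC (hq : q ≠ 0) (N : ℕ) (hN : 1 ≤ N) {a b k : ℕ} (ha : a ≤ N) (hb : b ≤ N - 1)
    (hk : k ≤ N) : pA q ^ a * (pC q ^ b * pD q ^ k) ∈ MM q N := by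
  rcases Nat.lt_or_ge k N with h | h
  · exact monoAC q N ha hb (by omega)
  have hkN : k = N := by omega
  subst hkN
  obtain ⟨m, rfl⟩ : ∃ m, k = m + 1 := ⟨k - 1, by omega⟩
  have claim : ∀ a', a' ≤ m + 1 → pA q ^ a' * (pD q ^ (m + 1) * pC q ^ b) ∈ MM q (m + 1) := by
    intro a'
    induction a' with
    | zero =>
      intro _
      have h0 := mmZmul q (m + 1) (pDpow_mem q (m + 1))
        (monoC_mem q (m + 1) (Nat.zero_le _) hb (Nat.zero_le _))
      simpa using h0
    | succ a ih =>
      intro ha'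
      have he : pA q ^ (a + 1) * (pD q ^ (m + 1) * pC q ^ b)
          = ((q⁻¹ * q⁻¹) ^ (m + 1) * (q ^ b)⁻¹) •
              ((pA q ^ a * (pD q ^ (m + 1) * pC q ^ b)) * pA q)
            + ((1 - (q⁻¹ * q⁻¹) ^ (m + 1)) * q ^ (m * b)) •
              (pA q ^ a * (pC q ^ b * pD q ^ m)) := by
        rw [pow_succ, mul_assoc, cAD hq m (pC q ^ b), mul_add]
        simp only [mul_smul_comm]
        rw [show pA q * pC q ^ b = (q ^ b)⁻¹ • (pC q ^ b * pA q) from by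
              rw [eq_inv_smul_iff₀ (pow_ne_zero _ hq), qc_single (hCA hq) b]]
        rw [sDCpow m b]
        simp only [mul_smul_comm, smul_smul]
        rw [mul_assoc (pA q ^ a) (pD q ^ (m + 1) * pC q ^ b) (pA q),
          mul_assoc (pD q ^ (m + 1)) (pC q ^ b) (pA q)]
      rw [he]
      exact add_mem (mmSmul _ _ _ (mulA hq (m + 1) (by omega) (ih (by omega))))
        (mmSmul _ _ _ (monoAC q (m + 1) (by omega) hb (by omega)))
  have he2 : pA q ^ a * (pC q ^ b * pD q ^ (m + 1))
      = (q ^ ((m + 1) * b))⁻¹ • (pA q ^ a * (pD q ^ (m + 1) * pC q ^ b)) := by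
    rw [sCDinv hq b (m + 1), mul_smul_comm]
  rw [he2]
  exact mmSmul _ _ _ (claim a ha)

theorem mulB (hq : q ≠ 0) (N : ℕ) (hN2 : 2 ≤ N) {y : Aq q} (hy : y ∈ MM q N) :
    y * pB q ∈ MM q N := by
  induction hy using AddSubmonoid.closure_induction with
  | mem s hs =>
    obtain ⟨z, hz, t, ht, rfl⟩ := hs
    rw [mul_assoc]
    refine mmZmul q N hz ?_
    rcases ht with ⟨i, j, k, hi, hj, hk, rfl⟩ | ⟨i, j, k, hi, hj, hk, rfl⟩
    · rw [proj_monoB]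
      have he : pA q ^ i * (pB q ^ j * pD q ^ k) * pB q
          = q ^ k • (pA q ^ i * (pB q ^ (j + 1) * pD q ^ k)) := by
        rw [mul_assoc, mul_assoc, sDBp k, mul_smul_comm, mul_smul_comm,
          ← mul_assoc (pB q ^ j) (pB q), ← pow_succ]
      rw [he]
      refine mmSmul _ _ _ ?_
      rcases Nat.lt_or_ge j (N - 1) with hj' | hj'
      · exact monoAB q N (by omega) (by omega) hk
      · have hjN : j + 1 = N := by omega
        rw [hjN, cAB hq i N (pD q ^ k)]
        refine mmSmul _ _ _ ?_
        refine mmZmul q N (pBpow_mem q N) ?_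
        have h0 := monoAB q N (show i ≤ N by omega) (Nat.zero_le _) hk
        simpa using h0
    · rw [proj_monoC]
      have he : pA q ^ i * (pC q ^ j * pD q ^ k) * pB q
          = q ^ k • (pA q ^ i * (pC q ^ j * (pB q * pD q ^ k))) := by
        rw [mul_assoc, mul_assoc, sDBp k, mul_smul_comm, mul_smul_comm]
      rw [he]
      refine mmSmul _ _ _ ?_
      rw [cCjB j (pD q ^ k)]
      cases j with
      | zero =>
        have h1 : pA q ^ i * (pB q * (pC q ^ 0 * pD q ^ k))
            = pA q ^ i * (pB q ^ 1 * pD q ^ k) := by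
          simp
        rw [h1]
        exact monoAB q N (by omega) (by omega) hk
      | succ j' =>
        have h1 : pC q ^ (j' + 1) * pD q ^ k = pC q * (pC q ^ j' * pD q ^ k) := by
          rw [pow_succ', mul_assoc]
        rw [h1, cBC hq (pC q ^ j' * pD q ^ k), cDc j' (pD q ^ k),
          show pD q * pD q ^ k = pD q ^ (k + 1) from (pow_succ' (pD q) k).symm, mul_sub]
        simp only [mul_smul_comm, smul_smul, smul_sub]
        rw [← mul_assoc (pA q ^ i) (pA q), ← pow_succ]
        exact mmSub q N
          (mmSmul _ _ _ (masterC hq N (by omega) (by omega) (by omega) (by omega)))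
          (mmSmul _ _ _ (monoAC q N (by omega) (by omega) hk))
  | zero => simpa using zero_mem (MM q N)
  | add a b ha hb iha ihb =>
    rw [add_mul]
    exact add_mem iha ihb

theorem mulC (hq : q ≠ 0) (N : ℕ) (hN2 : 2 ≤ N) {y : Aq q} (hy : y ∈ MM q N) :
    y * pC q ∈ MM q N := by
  induction hy using AddSubmonoid.closure_induction with
  | mem s hs =>
    obtain ⟨z, hz, t, ht, rfl⟩ := hs
    rw [mul_assoc]
    refine mmZmul q N hz ?_
    rcases ht with ⟨i, j, k, hi, hj, hk, rfl⟩ | ⟨i, j, k, hi, hj, hk, rfl⟩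
    · rw [proj_monoB]
      have he : pA q ^ i * (pB q ^ j * pD q ^ k) * pC q
          = q ^ k • (pA q ^ i * (pB q ^ j * (pC q * pD q ^ k))) := by
        rw [mul_assoc, mul_assoc, sDCp k, mul_smul_comm, mul_smul_comm]
      rw [he]
      refine mmSmul _ _ _ ?_
      cases j with
      | zero =>
        have h1 : pA q ^ i * (pB q ^ 0 * (pC q * pD q ^ k))
            = pA q ^ i * (pC q ^ 1 * pD q ^ k) := by
          simp
        rw [h1]
        exact monoAC q N (by omega) (by omega) hk
      | succ j' =>
        have h1 : pB q ^ (j' + 1) * (pC q * pD q ^ k)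
            = pB q ^ j' * (pB q * (pC q * pD q ^ k)) := by
          rw [pow_succ, mul_assoc]
        rw [h1, cBC hq (pD q ^ k),
          show pD q * pD q ^ k = pD q ^ (k + 1) from (pow_succ' (pD q) k).symm, mul_sub]
        simp only [mul_smul_comm]
        rw [cBA hq j' (pD q ^ (k + 1))]
        simp only [mul_smul_comm, smul_smul, mul_sub, smul_sub]
        rw [← mul_assoc (pA q ^ i) (pA q), ← pow_succ]
        exact mmSub q N
          (mmSmul _ _ _ (masterB hq N (by omega) (by omega) (by omega) (by omega)))
          (mmSmul _ _ _ (monoAB q N (by omega) (by omega) hk))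
    · rw [proj_monoC]
      have he : pA q ^ i * (pC q ^ j * pD q ^ k) * pC q
          = q ^ k • (pA q ^ i * (pC q ^ (j + 1) * pD q ^ k)) := by
        rw [mul_assoc, mul_assoc, sDCp k, mul_smul_comm, mul_smul_comm,
          ← mul_assoc (pC q ^ j) (pC q), ← pow_succ]
      rw [he]
      refine mmSmul _ _ _ ?_
      rcases Nat.lt_or_ge j (N - 1) with hj' | hj'
      · exact monoAC q N (by omega) (by omega) hk
      · have hjN : j + 1 = N := by omega
        rw [hjN, cAC hq i N (pD q ^ k)]
        refine mmSmul _ _ _ ?_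
        refine mmZmul q N (pCpow_mem q N) ?_
        have h0 := monoAC q N (show i ≤ N by omega) (Nat.zero_le _) hk
        simpa using h0
  | zero => simpa using zero_mem (MM q N)
  | add a b ha hb iha ihb =>
    rw [add_mul]
    exact add_mem iha ihb

theorem mulD (hq : q ≠ 0) (N : ℕ) (hN : 1 ≤ N) {y : Aq q} (hy : y ∈ MM q N) :
    y * pD q ∈ MM q N := by
  induction hy using AddSubmonoid.closure_induction with
  | mem s hs =>
    obtain ⟨z, hz, t, ht, rfl⟩ := hs
    rw [mul_assoc]
    refine mmZmul q N hz ?_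
    rcases ht with ⟨i, j, k, hi, hj, hk, rfl⟩ | ⟨i, j, k, hi, hj, hk, rfl⟩
    · rw [proj_monoB, mul_assoc, mul_assoc, ← pow_succ]
      exact masterB hq N hN (by omega) hj (by omega)
    · rw [proj_monoC, mul_assoc, mul_assoc, ← pow_succ]
      exact masterC hq N hN (by omega) hj (by omega)
  | zero => simpa using zero_mem (MM q N)
  | add a b ha hb iha ihb =>
    rw [add_mul]
    exact add_mem iha ihb

theorem adjoin_top (q : ℂ) (x : Aq q) :
    x ∈ Algebra.adjoin ℂ ({pA q, pB q, pC q, pD q} : Set (Aq q)) := by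
  obtain ⟨p, rfl⟩ := RingQuot.mkAlgHom_surjective ℂ (SL2Rel q) x
  induction p using FreeAlgebra.induction with
  | grade0 r =>
    rw [AlgHom.commutes]
    exact Subalgebra.algebraMap_mem _ r
  | grade1 i =>
    fin_cases i
    · exact Algebra.subset_adjoin (Or.inl rfl)
    · exact Algebra.subset_adjoin (Or.inr (Or.inl rfl))
    · exact Algebra.subset_adjoin (Or.inr (Or.inr (Or.inl rfl)))
    · exact Algebra.subset_adjoin (Or.inr (Or.inr (Or.inr rfl)))
  | mul a b ha hb =>
    rw [map_mul]
    exact mul_mem ha hb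
  | add a b ha hb =>
    rw [map_add]
    exact add_mem ha hb

theorem one_mem_MM (q : ℂ) (N : ℕ) : (1 : Aq q) ∈ MM q N := by
  have h0 := monoB_mem q N (Nat.zero_le _) (Nat.zero_le _) (Nat.zero_le _)
  simpa using h0

theorem main_thm (q : ℂ) (hq : q ≠ 0) (N : ℕ) (hN : 1 ≤ N) (x : Aq q) : x ∈ MM q N := by
  rcases Nat.lt_or_ge N 2 with h1 | h2
  · -- N = 1
    have hN1 : N = 1 := by omega
    subst hN1
    refine AddSubmonoid.subset_closure
      ⟨x, ?_, 1, Or.inl ⟨0, 0, 0, le_refl _, le_refl _, le_refl _, by simp⟩, (mul_one x).symm⟩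
    have h := adjoin_top q x
    simpa [pA, pB, pC, pD, pow_one] using h
  · -- 2 ≤ N
    have hx := adjoin_top q x
    have key : ∀ t ∈ Algebra.adjoin ℂ ({pA q, pB q, pC q, pD q} : Set (Aq q)),
        ∀ y ∈ MM q N, y * t ∈ MM q N := by
      intro t ht
      induction ht using Algebra.adjoin_induction with
      | mem g hg =>
        rcases hg with rfl | rfl | rfl | rfl
        · exact fun y hy => mulA hq N (by omega) hy
        · exact fun y hy => mulB hq N h2 hy
        · exact fun y hy => mulC hq N h2 hy
        · exact fun y hy => mulD hq N (by omega) hy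
      | algebraMap r =>
        intro y hy
        rw [← Algebra.commutes r y, ← Algebra.smul_def]
        exact mmSmul q N r hy
      | add t₁ t₂ h₁ h₂ ih₁ ih₂ =>
        intro y hy
        rw [mul_add]
        exact add_mem (ih₁ y hy) (ih₂ y hy)
      | mul t₁ t₂ h₁ h₂ ih₁ ih₂ =>
        intro y hy
        rw [← mul_assoc]
        exact ih₂ _ (ih₁ y hy)
    have := key x hx 1 (one_mem_MM q N)
    simpa using this

end Main

/-- For `N ≥ 1`, `A_q` is generated, as a left module over the unital
`ℂ`-subalgebra generated by `aᴺ, bᴺ, cᴺ, dᴺ`, by the finite set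
`{aⁱ bʲ dᵏ : 0 ≤ i,j,k ≤ N-1} ∪ {aⁱ cʲ dᵏ : 0 ≤ i,j,k ≤ N-1}`: every element of `A_q` is a
finite sum of elements `z * s` with `z` in that subalgebra and `s` in that finite set. -/
theorem Aq_finitely_generated_over_N_powers (q : ℂ) (hq : q ≠ 0) (N : ℕ) (hN : 1 ≤ N) :
    ∀ x : Aq q, x ∈ AddSubmonoid.closure
      {y : Aq q |
        ∃ z ∈ Algebra.adjoin ℂ ({projAq q (genA ^ N), projAq q (genB ^ N),
            projAq q (genC ^ N), projAq q (genD ^ N)} : Set (Aq q)),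
        ∃ s ∈ ({x : Aq q | ∃ i j k : ℕ, i ≤ N - 1 ∧ j ≤ N - 1 ∧ k ≤ N - 1 ∧
                  x = projAq q (genA ^ i * genB ^ j * genD ^ k)} ∪
               {x : Aq q | ∃ i j k : ℕ, i ≤ N - 1 ∧ j ≤ N - 1 ∧ k ≤ N - 1 ∧
                  x = projAq q (genA ^ i * genC ^ j * genD ^ k)} : Set (Aq q)),
        y = z * s} :=
  main_thm q hq N hN

end
end

section
/- An element x ∈ B lies in the center of B if and only if the support of x is contained in Γ⁰. Equivalently, the center of B equals the ℂ-linear span of { Z k : k ∈ Γ⁰ }. -/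
/-- Let `Γ` be an additive commutative group and `B` an associative unital
`ℂ`-algebra, free as a `ℂ`-module with basis `(Z k)_{k ∈ Γ}`, whose multiplication satisfies
`Z k * Z l = c k l • Z (k + l)`, where `c k l = ω ^ (σ k l)` for a biadditive skew-symmetric
form `σ : Γ → Γ → ℤ` and a primitive `N`-th root of unity `ω` with `N > 1` odd.  Then an
element `x ∈ B` is central iff the support of `x` is contained in
`Γ⁰ = {k | ∀ l, N ∣ σ k l}`; equivalently, the center of `B` is the `ℂ`-linear span of
`{Z k : k ∈ Γ⁰}`. -/
theorem center_of_quantum_torus {Γ : Type*} [AddCommGroup Γ]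
    {B : Type*} [Ring B] [Algebra ℂ B] (Z : Module.Basis Γ ℂ B)
    (N : ℕ) (hN : 1 < N) (hNodd : Odd N)
    (ω : ℂ) (hω : IsPrimitiveRoot ω N)
    (σ : Γ → Γ → ℤ)
    (hσ_add_left : ∀ k l m, σ (k + l) m = σ k m + σ l m)
    (hσ_add_right : ∀ k l m, σ k (l + m) = σ k l + σ k m)
    (hσ_skew : ∀ k l, σ k l = - σ l k)
    (c : Γ → Γ → ℂ) (hc : ∀ k l, c k l ≠ 0)
    (hcω : ∀ k l, c k l = ω ^ (σ k l))
    (hmul : ∀ k l, Z k * Z l = c k l • Z (k + l)) :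
    (∀ x : B, x ∈ Set.center B ↔
        ∀ k ∈ (Z.repr x).support, ∀ l : Γ, (N : ℤ) ∣ σ k l) ∧
    Set.center B = ↑(Submodule.span ℂ (⇑Z '' {k : Γ | ∀ l : Γ, (N : ℤ) ∣ σ k l})) := by
  classical
  have hω0 : ω ≠ 0 := by
    intro h
    have h1 := hω.pow_eq_one
    rw [h, zero_pow (by omega : N ≠ 0)] at h1
    exact one_ne_zero h1.symm
  -- coefficient of x * Z l
  have hright : ∀ (l m : Γ) (x : B),
      Z.repr (x * Z l) m = c (m - l) l * Z.repr x (m - l) := by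
    intro l m x
    have h : (Finsupp.lapply m ∘ₗ (Z.repr : B →ₗ[ℂ] (Γ →₀ ℂ)) ∘ₗ LinearMap.mulRight ℂ (Z l))
        = c (m - l) l • (Finsupp.lapply (m - l) ∘ₗ (Z.repr : B →ₗ[ℂ] (Γ →₀ ℂ))) := by
      apply Z.ext
      intro k
      simp only [LinearMap.comp_apply, LinearMap.smul_apply, LinearEquiv.coe_coe,
        LinearMap.mulRight_apply, Finsupp.lapply_apply, smul_eq_mul]
      rw [hmul]
      simp only [map_smul, Module.Basis.repr_self, Finsupp.smul_apply, smul_eq_mul]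
      rw [Finsupp.single_apply, Finsupp.single_apply]
      by_cases hk : k = m - l
      · subst hk
        rw [if_pos (by abel), if_pos rfl]
      · rw [if_neg (fun hh => hk (by rw [← hh]; abel)), if_neg hk]
        ring
    simpa using LinearMap.congr_fun h x
  -- coefficient of Z l * x
  have hleft : ∀ (l m : Γ) (x : B),
      Z.repr (Z l * x) m = c l (m - l) * Z.repr x (m - l) := by
    intro l m x
    have h : (Finsupp.lapply m ∘ₗ (Z.repr : B →ₗ[ℂ] (Γ →₀ ℂ)) ∘ₗ LinearMap.mulLeft ℂ (Z l))
        = c l (m - l) • (Finsupp.lapply (m - l) ∘ₗ (Z.repr : B →ₗ[ℂ] (Γ →₀ ℂ))) := by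
      apply Z.ext
      intro k
      simp only [LinearMap.comp_apply, LinearMap.smul_apply, LinearEquiv.coe_coe,
        LinearMap.mulLeft_apply, Finsupp.lapply_apply, smul_eq_mul]
      rw [hmul]
      simp only [map_smul, Module.Basis.repr_self, Finsupp.smul_apply, smul_eq_mul]
      rw [Finsupp.single_apply, Finsupp.single_apply]
      by_cases hk : k = m - l
      · subst hk
        rw [if_pos (by abel), if_pos rfl]
      · rw [if_neg (fun hh => hk (by rw [← hh]; abel)), if_neg hk]
        ring
    simpa using LinearMap.congr_fun h x
  -- c k l = c l k iff N ∣ σ k l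
  have hcc : ∀ k l : Γ, c k l = c l k ↔ (N : ℤ) ∣ σ k l := by
    intro k l
    rw [hcω, hcω, hσ_skew l k]
    constructor
    · intro h
      have h2 : ω ^ (σ k l - -σ k l) = 1 := by
        rw [zpow_sub₀ hω0, h, div_self (zpow_ne_zero _ hω0)]
      rw [sub_neg_eq_add, ← two_mul] at h2
      have hd := (hω.zpow_eq_one_iff_dvd _).mp h2
      have hcop : IsCoprime (N : ℤ) 2 := by
        have h3 : Nat.Coprime N 2 := Nat.coprime_two_right.mpr hNodd
        exact_mod_cast Nat.isCoprime_iff_coprime.mpr h3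
      exact hcop.dvd_of_dvd_mul_left hd
    · intro h
      have h1 : ω ^ (σ k l) = 1 := (hω.zpow_eq_one_iff_dvd _).mpr h
      have h2 : ω ^ (-σ k l) = 1 := (hω.zpow_eq_one_iff_dvd _).mpr (dvd_neg.mpr h)
      rw [h1, h2]
  -- first part
  have hmain : ∀ x : B, x ∈ Set.center B ↔
      ∀ k ∈ (Z.repr x).support, ∀ l : Γ, (N : ℤ) ∣ σ k l := by
    intro x
    rw [Semigroup.mem_center_iff]
    constructor
    · intro hx k hk l
      have h1 := hx (Z l)
      have h2 := congrArg (fun y => Z.repr y (k + l)) h1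
      simp only [hleft, hright, add_sub_cancel_right] at h2
      have hk0 : Z.repr x k ≠ 0 := Finsupp.mem_support_iff.mp hk
      have : c l k = c k l := mul_right_cancel₀ hk0 h2
      exact (hcc k l).mp this.symm
    · intro hx y
      have hy : y ∈ Submodule.span ℂ (Set.range Z) := by
        rw [Z.span_eq]; trivial
      induction hy using Submodule.span_induction with
      | mem y hy =>
        obtain ⟨l, rfl⟩ := hy
        apply Z.repr.injective
        ext m
        rw [hleft, hright]
        by_cases hm : Z.repr x (m - l) = 0
        · rw [hm, mul_zero, mul_zero]
        · have := hx (m - l) (Finsupp.mem_support_iff.mpr hm) l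
          rw [(hcc (m - l) l).mpr this]
      | zero => simp
      | add a b _ _ ha hb => rw [add_mul, mul_add, ha, hb]
      | smul r a _ ha => rw [smul_mul_assoc, mul_smul_comm, ha]
  refine ⟨hmain, ?_⟩
  ext x
  rw [SetLike.mem_coe, Z.mem_span_image, hmain x]
  constructor
  · intro h k hk
    exact h k hk
  · intro h k hk l
    exact h hk l
end

section
/- Let S ⊆ Γ be a set of coset representatives of Γ⁰ in Γ, i.e. the quotient map Γ → Γ/Γ⁰ restricts to a bijection from S onto Γ/Γ⁰. Then the family (Z k)_{k ∈ S} is a basis of B as a module over the center of B: these elements span B over the center, and whenever (z_k)_{k ∈ S} are central elements, almost all zero, with ∑_{k ∈ S} z_k * Z k = 0, then z_k = 0 for every k ∈ S. In particular, if Γ⁰ has finite index R in Γ, then B is a free module of rank R over its center. -/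
/-- With `B` a quantum torus over `ℂ` with basis `(Z k)_{k ∈ Γ}`,
`c k l = ω ^ (σ k l)`, `ω` a primitive `N`-th root of unity (`N > 1` odd), and
`Γ⁰ = {k | ∀ l, N ∣ σ k l}`, let `S ⊆ Γ` be a set of coset representatives of `Γ⁰` in `Γ`
(each `k ∈ Γ` differs from a unique `s ∈ S` by an element of `Γ⁰`).  Then the family
`(Z s)_{s ∈ S}` is a basis of `B` as a module over the center of `B`: every element of `B` is
a finite sum of elements `z * Z s` with `z` central and `s ∈ S`, and any finitely supported
central relation `∑ z_k * Z k = 0` over `S` has all coefficients zero. -/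
theorem quantum_torus_basis_over_center {Γ : Type*} [AddCommGroup Γ]
    {B : Type*} [Ring B] [Algebra ℂ B] (Z : Module.Basis Γ ℂ B)
    (N : ℕ) (hN : 1 < N) (hNodd : Odd N)
    (ω : ℂ) (hω : IsPrimitiveRoot ω N)
    (σ : Γ → Γ → ℤ)
    (hσ_add_left : ∀ k l m, σ (k + l) m = σ k m + σ l m)
    (hσ_add_right : ∀ k l m, σ k (l + m) = σ k l + σ k m)
    (hσ_skew : ∀ k l, σ k l = - σ l k)
    (c : Γ → Γ → ℂ) (hc : ∀ k l, c k l ≠ 0)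
    (hcω : ∀ k l, c k l = ω ^ (σ k l))
    (hmul : ∀ k l, Z k * Z l = c k l • Z (k + l))
    (S : Set Γ)
    (hS : ∀ k : Γ, ∃! s, s ∈ S ∧ ∀ l : Γ, (N : ℤ) ∣ σ (k - s) l) :
    (AddSubmonoid.closure
        {y : B | ∃ z ∈ Set.center B, ∃ s ∈ S, y = z * Z s} = ⊤) ∧
    (∀ T : Finset Γ, ↑T ⊆ S → ∀ z : Γ → B, (∀ k ∈ T, z k ∈ Set.center B) →
        ∑ k ∈ T, z k * Z k = 0 → ∀ k ∈ T, z k = 0) := by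
  have hωne : ω ≠ 0 := hω.ne_zero (by omega)
  have hω1 : ∀ n : ℤ, (N : ℤ) ∣ n → ω ^ n = 1 := by
    rintro n ⟨t, rfl⟩
    rw [zpow_mul, zpow_natCast, hω.pow_eq_one, one_zpow]
  have hσ0 : ∀ l, σ 0 l = 0 := by
    intro l
    have h := hσ_add_left 0 0 l
    rw [add_zero] at h
    omega
  -- representation of products with basis elements
  have hrepr_right : ∀ (x : B) (l j : Γ),
      Z.repr (x * Z l) j = c (j - l) l * Z.repr x (j - l) := by
    intro x l j
    have hL : ((Finsupp.lapply j : (Γ →₀ ℂ) →ₗ[ℂ] ℂ) ∘ₗ (Z.repr : B →ₗ[ℂ] (Γ →₀ ℂ)) ∘ₗ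
          (LinearMap.mulRight ℂ (Z l)))
        = c (j - l) l • ((Finsupp.lapply (j - l) : (Γ →₀ ℂ) →ₗ[ℂ] ℂ) ∘ₗ
          (Z.repr : B →ₗ[ℂ] (Γ →₀ ℂ))) := by
      apply Module.Basis.ext Z
      intro m
      simp only [LinearMap.comp_apply, LinearMap.mulRight_apply, LinearMap.smul_apply,
        Finsupp.lapply_apply, LinearEquiv.coe_coe, smul_eq_mul]
      rw [hmul, map_smul, Z.repr_self, Z.repr_self]
      simp only [Finsupp.smul_apply, smul_eq_mul]
      by_cases h : m + l = j
      · rw [← h]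
        have h3 : m + l - l = m := by abel
        rw [h3, Finsupp.single_eq_same, Finsupp.single_eq_same]
      · have h2 : m ≠ j - l := fun hm => h (by rw [hm]; abel)
        rw [Finsupp.single_eq_of_ne (Ne.symm h), Finsupp.single_eq_of_ne (Ne.symm h2), mul_zero, mul_zero]
    have := DFunLike.congr_fun hL x
    simpa using this
  have hrepr_left : ∀ (x : B) (l j : Γ),
      Z.repr (Z l * x) j = c l (j - l) * Z.repr x (j - l) := by
    intro x l j
    have hL : ((Finsupp.lapply j : (Γ →₀ ℂ) →ₗ[ℂ] ℂ) ∘ₗ (Z.repr : B →ₗ[ℂ] (Γ →₀ ℂ)) ∘ₗ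
          (LinearMap.mulLeft ℂ (Z l)))
        = c l (j - l) • ((Finsupp.lapply (j - l) : (Γ →₀ ℂ) →ₗ[ℂ] ℂ) ∘ₗ
          (Z.repr : B →ₗ[ℂ] (Γ →₀ ℂ))) := by
      apply Module.Basis.ext Z
      intro m
      simp only [LinearMap.comp_apply, LinearMap.mulLeft_apply, LinearMap.smul_apply,
        Finsupp.lapply_apply, LinearEquiv.coe_coe, smul_eq_mul]
      rw [hmul, map_smul, Z.repr_self, Z.repr_self]
      simp only [Finsupp.smul_apply, smul_eq_mul]
      by_cases h : l + m = j
      · rw [← h]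
        have h3 : l + m - l = m := by abel
        rw [h3, Finsupp.single_eq_same, Finsupp.single_eq_same]
      · have h2 : m ≠ j - l := fun hm => h (by rw [hm]; abel)
        rw [Finsupp.single_eq_of_ne (Ne.symm h), Finsupp.single_eq_of_ne (Ne.symm h2), mul_zero, mul_zero]
    have := DFunLike.congr_fun hL x
    simpa using this
  -- support of a central element lies in Γ⁰
  have hcenter_supp : ∀ z : B, z ∈ Set.center B → ∀ m, Z.repr z m ≠ 0 →
      ∀ l, (N : ℤ) ∣ σ m l := by
    intro z hz m hm l
    have hcomm : Z l * z = z * Z l := Semigroup.mem_center_iff.mp hz (Z l)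
    have h1 := hrepr_right z l (m + l)
    have h2 := hrepr_left z l (m + l)
    rw [← hcomm] at h1
    rw [h2] at h1
    have hml : m + l - l = m := by abel
    rw [hml] at h1
    have hcc : c m l = c l m := by
      rcases mul_right_cancel₀ hm h1.symm with h
      exact h
    rw [hcω, hcω, hσ_skew l m] at hcc
    have h2σ : ω ^ (2 * σ m l) = 1 := by
      have : ω ^ (σ m l) * ω ^ (- σ m l) = 1 := by
        rw [← zpow_add₀ hωne]
        simp
      rw [← hcc] at this
      rw [two_mul, zpow_add₀ hωne]
      exact this
    have hdvd : (N : ℤ) ∣ 2 * σ m l := (hω.zpow_eq_one_iff_dvd _).mp h2σ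
    have hcop : IsCoprime (N : ℤ) 2 := by
      have : Nat.Coprime N 2 := Nat.coprime_two_right.mpr hNodd
      exact_mod_cast this.isCoprime
    exact hcop.dvd_of_dvd_mul_left hdvd
  -- basis elements indexed by Γ⁰ are central
  have hZcentral : ∀ m, (∀ l, (N : ℤ) ∣ σ m l) → Z m ∈ Set.center B := by
    intro m hm
    rw [Semigroup.mem_center_iff]
    intro g
    apply Z.repr.injective
    ext j
    rw [hrepr_right, hrepr_left]
    have e1 : c (j - m) m = 1 := by
      rw [hcω, hσ_skew]
      rw [hω1 _ (dvd_neg.mpr (hm (j - m)))]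
    have e2 : c m (j - m) = 1 := hcω m (j - m) ▸ hω1 _ (hm (j - m))
    rw [e1, e2]
  have hsmul_central : ∀ (a : ℂ) (z : B), z ∈ Set.center B → a • z ∈ Set.center B := by
    intro a z hz
    rw [Semigroup.mem_center_iff]
    intro g
    rw [mul_smul_comm, Semigroup.mem_center_iff.mp hz g, smul_mul_assoc]
  constructor
  · -- spanning
    rw [eq_top_iff]
    intro x _
    have hx : x = ∑ m ∈ (Z.repr x).support, Z.repr x m • Z m := by
      conv_lhs => rw [← Z.linearCombination_repr x]
      rw [Finsupp.linearCombination_apply, Finsupp.sum]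
    rw [hx]
    apply AddSubmonoid.sum_mem
    intro m _
    apply AddSubmonoid.subset_closure
    obtain ⟨s, ⟨hsS, hsd⟩, _⟩ := hS m
    refine ⟨Z.repr x m • Z (m - s), hsmul_central _ _ (hZcentral _ hsd), s, hsS, ?_⟩
    rw [smul_mul_assoc, hmul, hcω, hω1 _ (hsd s), one_smul, sub_add_cancel]
  · -- independence
    intro T hT z hzc hsum k0 hk0
    apply Z.repr.injective
    ext m
    simp only [map_zero, Finsupp.zero_apply]
    by_contra hm
    have h0 : Z.repr (∑ k ∈ T, z k * Z k) (m + k0) = 0 := by rw [hsum]; simp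
    rw [map_sum, Finsupp.finset_sum_apply] at h0
    have hterm : ∀ k ∈ T, k ≠ k0 → Z.repr (z k * Z k) (m + k0) = 0 := by
      intro k hkT hkne
      rw [hrepr_right]
      rcases eq_or_ne (Z.repr (z k) (m + k0 - k)) 0 with h | h
      · rw [h, mul_zero]
      · exfalso
        have hmΓ : ∀ l, (N : ℤ) ∣ σ m l := hcenter_supp _ (hzc k0 hk0) m hm
        have hkΓ : ∀ l, (N : ℤ) ∣ σ (m + k0 - k) l := hcenter_supp _ (hzc k hkT) _ h
        have hdiff : ∀ l, (N : ℤ) ∣ σ (k0 - k) l := by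
          intro l
          have heq : σ (m + (k0 - k)) l = σ m l + σ (k0 - k) l := hσ_add_left m (k0 - k) l
          have hrw : m + k0 - k = m + (k0 - k) := by abel
          rw [hrw] at hkΓ
          have := hkΓ l
          rw [heq] at this
          exact (Int.dvd_add_right (hmΓ l)).mp this
        obtain ⟨s, _, huniq⟩ := hS k0
        have h1 : k = s := huniq k ⟨hT hkT, hdiff⟩
        have h2 : k0 = s := huniq k0 ⟨hT hk0, by intro l; rw [sub_self, hσ0]; exact dvd_zero _⟩
        exact hkne (h1.trans h2.symm)
    rw [Finset.sum_eq_single_of_mem k0 hk0 hterm] at h0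
    rw [hrepr_right] at h0
    have hmm : m + k0 - k0 = m := by abel
    rw [hmm] at h0
    exact hm (by
      rcases mul_eq_zero.mp h0 with h | h
      · exact absurd h (hc _ _)
      · exact h)
end

section
/- Let A ⊆ B be a unital ℂ-subalgebra such that the subgroup of Γ generated by the set { v(a) : a ∈ A, a ≠ 0 } is all of Γ. If x ∈ A is nonzero and commutes with every element of A, then v(x) ∈ Γ⁰. -/
/-- The valuation (leading exponent) of an element of an algebra `B` that is free as a
`ℂ`-module with basis indexed by a linearly ordered group `Γ`: the maximum of the support of
the basis expansion, with value `⊥` exactly on `x = 0`. -/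
noncomputable def val {Γ B : Type*} [AddCommGroup Γ] [LinearOrder Γ] [IsOrderedAddMonoid Γ] [Ring B] [Algebra ℂ B]
    (Z : Module.Basis Γ ℂ B) (x : B) : WithBot Γ :=
  (Z.repr x).support.max

/-- Leading coefficient of a product in a quantum torus. -/
lemma repr_mul_top {Γ B : Type*} [AddCommGroup Γ] [LinearOrder Γ] [IsOrderedAddMonoid Γ] [Ring B] [Algebra ℂ B]
    (Z : Module.Basis Γ ℂ B) (c : Γ → Γ → ℂ)
    (hmul : ∀ k l, Z k * Z l = c k l • Z (k + l))
    (u v : B) (g h : Γ) (hgu : ∀ k ∈ (Z.repr u).support, k ≤ g)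
    (hhv : ∀ l ∈ (Z.repr v).support, l ≤ h) :
    Z.repr (u * v) (g + h) = Z.repr u g * Z.repr v h * c g h := by
  conv_lhs => rw [← Z.linearCombination_repr u, ← Z.linearCombination_repr v]
  rw [Finsupp.linearCombination_apply, Finsupp.linearCombination_apply,
    Finsupp.sum, Finsupp.sum, Finset.sum_mul]
  simp only [Finset.mul_sum, smul_mul_smul_comm, hmul, smul_smul, map_sum, map_smul,
    Z.repr_self, Finsupp.smul_single, smul_eq_mul, mul_one, Finset.sum_apply',
    Finsupp.single_apply]
  rw [Finset.sum_eq_single g]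
  · rw [Finset.sum_eq_single h]
    · simp
    · intro l hl hne
      simp [add_right_inj, hne]
    · intro hh0
      simp [Finsupp.notMem_support_iff.mp hh0]
  · intro k hk hne
    apply Finset.sum_eq_zero
    intro l hl
    have hk' : k < g := lt_of_le_of_ne (hgu k hk) hne
    have : k + l < g + h := add_lt_add_of_lt_of_le hk' (hhv l hl)
    simp [this.ne]
  · intro hg0
    apply Finset.sum_eq_zero
    intro l hl
    simp [Finsupp.notMem_support_iff.mp hg0]

/-- With `B` a quantum torus over `ℂ` with basis `(Z k)_{k ∈ Γ}` indexed by a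
linearly ordered additive group `Γ`, `c k l = ω ^ (σ k l)`, `ω` a primitive `N`-th root of
unity (`N > 1` odd), let `A ⊆ B` be a unital `ℂ`-subalgebra such that the subgroup of `Γ`
generated by the valuations `v a` of nonzero elements `a ∈ A` is all of `Γ`.  If `x ∈ A` is
nonzero and commutes with every element of `A`, then
`v x ∈ Γ⁰ = {k | ∀ l, N ∣ σ k l}`. -/
theorem val_of_relatively_central_mem_kernel {Γ : Type*} [AddCommGroup Γ] [LinearOrder Γ] [IsOrderedAddMonoid Γ]
    {B : Type*} [Ring B] [Algebra ℂ B] (Z : Module.Basis Γ ℂ B)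
    (N : ℕ) (hN : 1 < N) (hNodd : Odd N)
    (ω : ℂ) (hω : IsPrimitiveRoot ω N)
    (σ : Γ → Γ → ℤ)
    (hσ_add_left : ∀ k l m, σ (k + l) m = σ k m + σ l m)
    (hσ_add_right : ∀ k l m, σ k (l + m) = σ k l + σ k m)
    (hσ_skew : ∀ k l, σ k l = - σ l k)
    (c : Γ → Γ → ℂ) (hc : ∀ k l, c k l ≠ 0)
    (hcω : ∀ k l, c k l = ω ^ (σ k l))
    (hmul : ∀ k l, Z k * Z l = c k l • Z (k + l))
    (A : Subalgebra ℂ B)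
    (hgen : AddSubgroup.closure
        {g : Γ | ∃ a ∈ A, a ≠ 0 ∧ val Z a = (g : WithBot Γ)} = ⊤)
    (x : B) (hxA : x ∈ A) (hx : x ≠ 0)
    (hcomm : ∀ y ∈ A, x * y = y * x) :
    ∃ g : Γ, val Z x = (g : WithBot Γ) ∧ ∀ l : Γ, (N : ℤ) ∣ σ g l := by
  -- basic facts about σ
  have hσ_zero : ∀ k, σ k 0 = 0 := by
    intro k
    have := hσ_add_right k 0 0
    simpa using this
  have hσ_neg : ∀ k l, σ k (-l) = - σ k l := by
    intro k l
    have := hσ_add_right k l (-l)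
    simp [hσ_zero] at this
    omega
  -- the leading exponent g of x
  have hxsupp : (Z.repr x).support.Nonempty := by
    rw [Finsupp.support_nonempty_iff]
    simpa using hx
  obtain ⟨g, hg⟩ := Finset.max_of_nonempty hxsupp
  refine ⟨g, hg, ?_⟩
  have hgmem : g ∈ (Z.repr x).support := Finset.mem_of_max hg
  have hgle : ∀ k ∈ (Z.repr x).support, k ≤ g := fun k hk =>
    Finset.le_max_of_eq hk hg
  have hxg : Z.repr x g ≠ 0 := Finsupp.mem_support_iff.mp hgmem
  -- the subgroup { l | N ∣ σ g l }
  have hωz : ω ≠ 0 := hω.ne_zero (by omega)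
  set S : AddSubgroup Γ :=
    { carrier := {l : Γ | (N : ℤ) ∣ σ g l}
      zero_mem' := by simp [hσ_zero]
      add_mem' := by
        intro a b ha hb
        simp only [Set.mem_setOf_eq, hσ_add_right] at *
        exact dvd_add ha hb
      neg_mem' := by
        intro a ha
        simp only [Set.mem_setOf_eq, hσ_neg] at *
        exact ha.neg_right } with hS
  have hsub : {h : Γ | ∃ a ∈ A, a ≠ 0 ∧ val Z a = (h : WithBot Γ)} ⊆ S := by
    rintro h ⟨a, haA, ha0, hva⟩
    have hasupp : (Z.repr a).support.max = (h : WithBot Γ) := hva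
    have hhmem : h ∈ (Z.repr a).support := Finset.mem_of_max hasupp
    have hhle : ∀ l ∈ (Z.repr a).support, l ≤ h := fun l hl =>
      Finset.le_max_of_eq hl hasupp
    have hah : Z.repr a h ≠ 0 := Finsupp.mem_support_iff.mp hhmem
    have e1 : Z.repr (x * a) (g + h) = Z.repr x g * Z.repr a h * c g h :=
      repr_mul_top Z c hmul x a g h hgle hhle
    have e2 : Z.repr (a * x) (h + g) = Z.repr a h * Z.repr x g * c h g :=
      repr_mul_top Z c hmul a x h g hhle hgle
    rw [hcomm a haA, add_comm g h] at e1
    have hceq : c g h = c h g := by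
      have h12 := e1.symm.trans e2
      rw [mul_comm (Z.repr a h) (Z.repr x g)] at h12
      exact mul_left_cancel₀ (mul_ne_zero hxg hah) h12
    rw [hcω, hcω] at hceq
    have hω2 : ω ^ (2 * σ g h) = 1 := by
      have : σ h g = - σ g h := by rw [hσ_skew h g]
      rw [this] at hceq
      have : ω ^ (σ g h) * ω ^ (σ g h) = ω ^ (- σ g h) * ω ^ (σ g h) := by
        rw [hceq]
      rw [← zpow_add₀ hωz, ← zpow_add₀ hωz] at this
      simpa [two_mul] using this
    have hdvd2 : (N : ℤ) ∣ 2 * σ g h := (hω.zpow_eq_one_iff_dvd _).mp hω2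
    have hcop : IsCoprime (N : ℤ) 2 := by
      rw [Int.isCoprime_iff_gcd_eq_one]
      have h2 : Nat.Coprime N 2 := hNodd.coprime_two_right
      show Int.gcd (N : ℤ) (((2 : ℕ) : ℤ)) = 1
      rw [Int.gcd_natCast_natCast]
      exact h2
    exact hcop.dvd_of_dvd_mul_left hdvd2
  intro l
  have hl : l ∈ AddSubgroup.closure
      {h : Γ | ∃ a ∈ A, a ≠ 0 ∧ val Z a = (h : WithBot Γ)} := by
    rw [hgen]; trivial
  exact (AddSubgroup.closure_le S).mpr hsub hl
end
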